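/- arXiv:2201.13136 — 7 statements merged into one kernel-verified Lean document; each statement's English description precedes it below -/
import Mathlib

section
/- Let X and Y be Hausdorff topological spaces, K : X ⇉ Y a continuous correspondence with nonempty compact values, and θ : X × Y → ℝ a function that is continuous on the graph gra(K). Define the argmax correspondence M₀ : X ⇉ Y by M₀(x) = {y ∈ K(x) : θ(x,y) = sup_{z ∈ K(x)} θ(x,z)} and the value function m : X → ℝ by m(x) = sup_{z ∈ K(x)} θ(x,z). Then M₀ is upper semicontinuous with nonempty compact values, and m is continuous. -/
open Set Filter Topology

/-- **Berge's maximum theorem.** If `K : X ⇉ Y` is a continuous correspondence with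
nonempty compact values and `θ` is continuous on the graph of `K`, then the argmax
correspondence `M₀` is upper semicontinuous with nonempty compact values, and the
value function `m` is continuous. -/
theorem berge_maximum_theorem
    {X Y : Type*} [TopologicalSpace X] [T2Space X] [TopologicalSpace Y] [T2Space Y]
    (K : X → Set Y)
    (hKne : ∀ x, (K x).Nonempty) (hKcomp : ∀ x, IsCompact (K x))
    (hKlsc : ∀ G : Set Y, IsOpen G → IsOpen {x | (K x ∩ G).Nonempty})
    (hKusc : ∀ F : Set Y, IsClosed F → IsClosed {x | (K x ∩ F).Nonempty})
    (θ : X × Y → ℝ) (hθ : ContinuousOn θ {p : X × Y | p.2 ∈ K p.1})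
    (m : X → ℝ) (hm : ∀ x, m x = sSup ((fun z => θ (x, z)) '' K x))
    (M₀ : X → Set Y) (hM₀ : ∀ x, M₀ x = {y ∈ K x | θ (x, y) = m x}) :
    (∀ F : Set Y, IsClosed F → IsClosed {x | (M₀ x ∩ F).Nonempty}) ∧
    (∀ x, (M₀ x).Nonempty) ∧ (∀ x, IsCompact (M₀ x)) ∧ Continuous m := by
  -- slice continuity
  have hslice : ∀ x : X, ContinuousOn (fun y => θ (x, y)) (K x) := by
    intro x
    exact hθ.comp ((continuous_const.prodMk continuous_id).continuousOn)
      (fun y hy => by simpa using hy)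
  have hbdd : ∀ x, BddAbove ((fun z => θ (x, z)) '' K x) :=
    fun x => ((hKcomp x).image_of_continuousOn (hslice x)).bddAbove
  have hle : ∀ x, ∀ y ∈ K x, θ (x, y) ≤ m x := by
    intro x y hy; rw [hm]; exact le_csSup (hbdd x) (mem_image_of_mem _ hy)
  -- rectangle extraction from continuity on the graph
  have hrect : ∀ (x : X) (y : Y), y ∈ K x → ∀ s : Set ℝ, IsOpen s → θ (x, y) ∈ s →
      ∃ U : Set X × Set Y, IsOpen U.1 ∧ IsOpen U.2 ∧ x ∈ U.1 ∧ y ∈ U.2 ∧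
        ∀ x' y', x' ∈ U.1 → y' ∈ U.2 → y' ∈ K x' → θ (x', y') ∈ s := by
    intro x y hy s hs hmem
    have hcw : ContinuousWithinAt θ {p : X × Y | p.2 ∈ K p.1} (x, y) := hθ (x, y) hy
    have h1 : θ ⁻¹' s ∈ 𝓝[{p : X × Y | p.2 ∈ K p.1}] (x, y) := hcw (hs.mem_nhds hmem)
    obtain ⟨O, hOopen, hOmem, hOsub⟩ := mem_nhdsWithin.mp h1
    obtain ⟨U, V, hU, hxU, hV, hyV, hsub⟩ := mem_nhds_prod_iff'.mp (hOopen.mem_nhds hOmem)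
    exact ⟨(U, V), hU, hV, hxU, hyV, fun x' y' hx' hy' hKy' =>
      hOsub ⟨hsub ⟨hx', hy'⟩, hKy'⟩⟩
  -- nonemptiness of M₀
  have hM₀ne : ∀ x, (M₀ x).Nonempty := by
    intro x
    obtain ⟨y, hy, hsup⟩ := (hKcomp x).exists_sSup_image_eq (hKne x) (hslice x)
    exact ⟨y, by rw [hM₀]; exact ⟨hy, by rw [hm]; exact hsup.symm⟩⟩
  -- compactness of M₀
  have hM₀comp : ∀ x, IsCompact (M₀ x) := by
    intro x
    have hclosed : IsClosed (M₀ x) := by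
      rw [hM₀]
      have : {y ∈ K x | θ (x, y) = m x} = K x ∩ (fun y => θ (x, y)) ⁻¹' {m x} := rfl
      rw [this]
      exact (hslice x).preimage_isClosed_of_isClosed (hKcomp x).isClosed isClosed_singleton
    exact (hKcomp x).of_isClosed_subset hclosed (by rw [hM₀]; exact sep_subset _ _)
  -- continuity of m
  have hmcont : Continuous m := by
    rw [continuous_iff_continuousAt]
    intro x₀
    rw [ContinuousAt, tendsto_order]
    constructor
    · -- lower semicontinuity of m
      intro c hc
      obtain ⟨y, hyM⟩ := hM₀ne x₀
      rw [hM₀] at hyM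
      obtain ⟨hyK, hyeq⟩ := hyM
      obtain ⟨⟨U, V⟩, hU, hV, hxU, hyV, hP⟩ := hrect x₀ y hyK (Ioi c) isOpen_Ioi
        (by simpa [hyeq] using hc)
      have hopen : IsOpen (U ∩ {x | (K x ∩ V).Nonempty}) := hU.inter (hKlsc V hV)
      have hx₀mem : x₀ ∈ U ∩ {x | (K x ∩ V).Nonempty} := ⟨hxU, ⟨y, hyK, hyV⟩⟩
      filter_upwards [hopen.mem_nhds hx₀mem] with x' hx'
      obtain ⟨hx'U, y', hy'K, hy'V⟩ := hx'
      exact lt_of_lt_of_le (hP x' y' hx'U hy'V hy'K) (hle x' y' hy'K)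
    · -- upper semicontinuity of m
      intro c hc
      set c' : ℝ := (m x₀ + c) / 2 with hc'def
      have hc'1 : m x₀ < c' := by simp only [hc'def]; linarith
      have hc'2 : c' < c := by simp only [hc'def]; linarith
      have hchoice : ∀ y : (K x₀ : Set Y),
          ∃ U : Set X × Set Y, IsOpen U.1 ∧ IsOpen U.2 ∧ x₀ ∈ U.1 ∧ (y : Y) ∈ U.2 ∧
            ∀ x' y', x' ∈ U.1 → y' ∈ U.2 → y' ∈ K x' → θ (x', y') ∈ Iio c' :=
        fun y => hrect x₀ y y.2 (Iio c') isOpen_Iio ((hle x₀ y y.2).trans_lt hc'1)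
      choose W hW1 hW2 hW3 hW4 hW5 using hchoice
      obtain ⟨t, ht⟩ := (hKcomp x₀).elim_finite_subcover (fun y => (W y).2) hW2
        (fun y hy => mem_iUnion.2 ⟨⟨y, hy⟩, hW4 _⟩)
      have hUopen : IsOpen (⋂ i ∈ t, (W i).1) := isOpen_biInter_finset (fun i _ => hW1 i)
      have hGopen : IsOpen (⋃ i ∈ t, (W i).2) := isOpen_biUnion (fun i _ => hW2 i)
      have hWopen : IsOpen {x | (K x ∩ (⋃ i ∈ t, (W i).2)ᶜ).Nonempty}ᶜ :=
        (hKusc _ hGopen.isClosed_compl).isOpen_compl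
      have hx₀mem : x₀ ∈ (⋂ i ∈ t, (W i).1) ∩ {x | (K x ∩ (⋃ i ∈ t, (W i).2)ᶜ).Nonempty}ᶜ := by
        refine ⟨mem_iInter₂.2 fun i _ => hW3 i, ?_⟩
        rintro ⟨y, hyK, hyc⟩
        exact hyc (ht hyK)
      filter_upwards [(hUopen.inter hWopen).mem_nhds hx₀mem] with x' hx'
      obtain ⟨hx'U, hx'W⟩ := hx'
      have hmle : m x' ≤ c' := by
        rw [hm]
        apply csSup_le ((hKne x').image _)
        rintro r ⟨y', hy'K, rfl⟩
        have hy'cov : y' ∈ ⋃ i ∈ t, (W i).2 := by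
          by_contra h
          exact hx'W ⟨y', hy'K, h⟩
        obtain ⟨i, hit, hy'V⟩ := mem_iUnion₂.mp hy'cov
        exact le_of_lt (hW5 i x' y' (mem_iInter₂.mp hx'U i hit) hy'V hy'K)
      exact lt_of_le_of_lt hmle hc'2
  -- upper semicontinuity of M₀
  have hM₀usc : ∀ F : Set Y, IsClosed F → IsClosed {x | (M₀ x ∩ F).Nonempty} := by
    intro F hF
    rw [← isOpen_compl_iff, isOpen_iff_mem_nhds]
    intro x₀ hx₀
    have hM₀sub : ∀ x, M₀ x ⊆ K x := fun x => by rw [hM₀]; exact sep_subset _ _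
    rcases (K x₀ ∩ F).eq_empty_or_nonempty with hKF | hKF
    · -- K x₀ misses F entirely
      have hWopen : IsOpen {x | (K x ∩ F).Nonempty}ᶜ := (hKusc F hF).isOpen_compl
      have hx₀W : x₀ ∈ {x | (K x ∩ F).Nonempty}ᶜ := by
        simp only [mem_compl_iff, mem_setOf_eq, hKF]
        exact not_nonempty_empty
      filter_upwards [hWopen.mem_nhds hx₀W] with x hx
      rintro ⟨y, hyM, hyF⟩
      exact hx ⟨y, hM₀sub x hyM, hyF⟩
    · -- every point of K x₀ ∩ F is a strict non-maximizer
      have hlt : ∀ y ∈ K x₀ ∩ F, θ (x₀, y) < m x₀ := by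
        rintro y ⟨hyK, hyF⟩
        refine lt_of_le_of_ne (hle x₀ y hyK) ?_
        intro heq
        exact hx₀ ⟨y, by rw [hM₀]; exact ⟨hyK, heq⟩, hyF⟩
      have hchoice : ∀ y : (K x₀ ∩ F : Set Y),
          ∃ U : Set X × Set Y, IsOpen U.1 ∧ IsOpen U.2 ∧ x₀ ∈ U.1 ∧ (y : Y) ∈ U.2 ∧
            ∀ x' y', x' ∈ U.1 → y' ∈ U.2 → y' ∈ K x' →
              θ (x', y') ∈ Iio ((θ (x₀, (y : Y)) + m x₀) / 2) :=
        fun y => hrect x₀ y y.2.1 (Iio ((θ (x₀, (y : Y)) + m x₀) / 2)) isOpen_Iio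
          (by have := hlt y y.2; simp only [mem_Iio]; linarith)
      choose W hW1 hW2 hW3 hW4 hW5 using hchoice
      obtain ⟨t, ht⟩ := ((hKcomp x₀).inter_right hF).elim_finite_subcover
        (fun y => (W y).2) hW2 (fun y hy => mem_iUnion.2 ⟨⟨y, hy⟩, hW4 _⟩)
      have htne : t.Nonempty := by
        obtain ⟨y, hy⟩ := hKF
        obtain ⟨i, hit, _⟩ := mem_iUnion₂.mp (ht hy)
        exact ⟨i, hit⟩
      set C : ℝ := t.sup' htne (fun y => (θ (x₀, (y : Y)) + m x₀) / 2) with hCdef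
      have hClt : C < m x₀ := by
        rw [hCdef, Finset.sup'_lt_iff htne]
        intro i _
        have := hlt i i.2
        linarith
      have hUopen : IsOpen (⋂ i ∈ t, (W i).1) := isOpen_biInter_finset (fun i _ => hW1 i)
      have hGopen : IsOpen (⋃ i ∈ t, (W i).2) := isOpen_biUnion (fun i _ => hW2 i)
      have hW'closed : IsClosed (F ∩ (⋃ i ∈ t, (W i).2)ᶜ) := hF.inter hGopen.isClosed_compl
      have hW'open : IsOpen {x | (K x ∩ (F ∩ (⋃ i ∈ t, (W i).2)ᶜ)).Nonempty}ᶜ :=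
        (hKusc _ hW'closed).isOpen_compl
      have hmopen : IsOpen (m ⁻¹' Ioi C) := isOpen_Ioi.preimage hmcont
      have hx₀mem : x₀ ∈ (⋂ i ∈ t, (W i).1) ∩
          ({x | (K x ∩ (F ∩ (⋃ i ∈ t, (W i).2)ᶜ)).Nonempty}ᶜ ∩ m ⁻¹' Ioi C) := by
        refine ⟨mem_iInter₂.2 fun i _ => hW3 i, ?_, hClt⟩
        rintro ⟨y, hyK, hyF, hyc⟩
        exact hyc (ht ⟨hyK, hyF⟩)
      filter_upwards [((hUopen.inter (hW'open.inter hmopen)).mem_nhds hx₀mem)] with x hx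
      obtain ⟨hxU, hxW', hxm⟩ := hx
      rintro ⟨y, hyM, hyF⟩
      rw [hM₀] at hyM
      obtain ⟨hyK, hyeq⟩ := hyM
      have hycov : y ∈ ⋃ i ∈ t, (W i).2 := by
        by_contra h
        exact hxW' ⟨y, hyK, hyF, h⟩
      obtain ⟨i, hit, hyVi⟩ := mem_iUnion₂.mp hycov
      have h1 : θ (x, y) < (θ (x₀, (i : Y)) + m x₀) / 2 :=
        hW5 i x y (mem_iInter₂.mp hxU i hit) hyVi hyK
      have h2 : (θ (x₀, (i : Y)) + m x₀) / 2 ≤ C := by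
        rw [hCdef]
        exact Finset.le_sup' (fun y : (K x₀ ∩ F : Set Y) => (θ (x₀, (y : Y)) + m x₀) / 2) hit
      have h3 : C < m x := hxm
      rw [hyeq] at h1
      linarith
  exact ⟨hM₀usc, hM₀ne, hM₀comp, hmcont⟩
end

section
/- Let X and Y be Hausdorff topological spaces, K : X ⇉ Y a continuous correspondence with nonempty compact values whose graph gra(K), with the subspace topology of X × Y, is a normal topological space, and M : X ⇉ Y a correspondence with nonempty values such that M(x) ⊆ K(x) for all x ∈ X. Suppose there exists a function θ : X × Y → [0,1], continuous on gra(K), such that gra(M) = {(x,y) ∈ gra(K) : θ(x,y) = sup_{z ∈ K(x)} θ(x,z)}. Then gra(M) is a closed subset of the subspace gra(K) and a Gδ subset of the subspace gra(K), i.e. there is a countable family (Uₙ) of open subsets of X × Y with gra(M) = gra(K) ∩ ⋂ₙ Uₙ. -/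
open Set

/-- The graph of a correspondence `K : X ⇉ Y`. -/
def corrGraph {X Y : Type*} (K : X → Set Y) : Set (X × Y) := {p | p.2 ∈ K p.1}

section Aux
variable {X Y : Type*} [TopologicalSpace X] [TopologicalSpace Y]
  {K : X → Set Y} {θ : X × Y → ℝ}

lemma aux_attained (hKne : ∀ x, (K x).Nonempty) (hKcomp : ∀ x, IsCompact (K x))
    (hθc : ContinuousOn θ (corrGraph K)) (x : X) :
    ∃ z ∈ K x, θ (x, z) = sSup ((fun z => θ (x, z)) '' K x) ∧
      ∀ y ∈ K x, θ (x, y) ≤ sSup ((fun z => θ (x, z)) '' K x) := by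
  have hc : ContinuousOn (fun z => θ (x, z)) (K x) := by
    apply hθc.comp (Continuous.continuousOn (by continuity))
    intro z hz; exact hz
  obtain ⟨z, hz, hmax⟩ := (hKcomp x).exists_isMaxOn (hKne x) hc
  have hgreat : IsGreatest ((fun z => θ (x, z)) '' K x) (θ (x, z)) :=
    ⟨mem_image_of_mem _ hz, by rintro _ ⟨y, hy, rfl⟩; exact hmax hy⟩
  refine ⟨z, hz, hgreat.csSup_eq.symm, fun y hy => ?_⟩
  exact le_csSup ⟨θ (x, z), hgreat.2⟩ (mem_image_of_mem _ hy)

/-- Extract a rectangle neighborhood on which `θ` lands in an open set `I`. -/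
lemma aux_rect (hθc : ContinuousOn θ (corrGraph K)) (x : X) (y : Y)
    (hxy : (x, y) ∈ corrGraph K) {I : Set ℝ} (hI : IsOpen I) (hmem : θ (x, y) ∈ I) :
    ∃ (U : Set X) (V : Set Y), IsOpen U ∧ IsOpen V ∧ x ∈ U ∧ y ∈ V ∧
      ∀ p ∈ (U ×ˢ V) ∩ corrGraph K, θ p ∈ I := by
  have h1 : θ ⁻¹' I ∈ nhdsWithin (x, y) (corrGraph K) :=
    hθc (x, y) hxy (hI.mem_nhds hmem)
  rw [mem_nhdsWithin] at h1
  obtain ⟨u, huo, humem, husub⟩ := h1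
  obtain ⟨U, V, hUo, hxU, hVo, hyV, hUV⟩ := mem_nhds_prod_iff'.1 (huo.mem_nhds humem)
  exact ⟨U, V, hUo, hVo, hxU, hyV, fun p hp => husub ⟨hUV hp.1, hp.2⟩⟩

lemma aux_usc (hKne : ∀ x, (K x).Nonempty) (hKcomp : ∀ x, IsCompact (K x))
    (hKusc : ∀ F : Set Y, IsClosed F → IsClosed {x | (K x ∩ F).Nonempty})
    (hθc : ContinuousOn θ (corrGraph K))
    (x₀ : X) (c : ℝ) (hc : sSup ((fun z => θ (x₀, z)) '' K x₀) < c) :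
    ∃ U, IsOpen U ∧ x₀ ∈ U ∧ ∀ x ∈ U, sSup ((fun z => θ (x, z)) '' K x) < c := by
  have H : ∀ y : ↥(K x₀), ∃ (U : Set X) (V : Set Y), IsOpen U ∧ IsOpen V ∧
      x₀ ∈ U ∧ (y : Y) ∈ V ∧ ∀ p ∈ (U ×ˢ V) ∩ corrGraph K, θ p < c := by
    intro y
    have hy : (x₀, (y : Y)) ∈ corrGraph K := y.2
    obtain ⟨-, -, -, hb⟩ := aux_attained hKne hKcomp hθc x₀
    have hlt : θ (x₀, (y : Y)) < c := lt_of_le_of_lt (hb y y.2) hc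
    obtain ⟨U, V, hUo, hVo, hxU, hyV, h⟩ := aux_rect hθc x₀ y hy isOpen_Iio hlt
    exact ⟨U, V, hUo, hVo, hxU, hyV, h⟩
  choose Uf Vf hUo hVo hxU hyV hlt using H
  obtain ⟨t, ht⟩ := (hKcomp x₀).elim_finite_subcover Vf hVo
    (fun y hy => mem_iUnion.2 ⟨⟨y, hy⟩, hyV ⟨y, hy⟩⟩)
  refine ⟨(⋂ i ∈ t, Uf i) ∩ {x | (K x ∩ (⋃ i ∈ t, Vf i)ᶜ).Nonempty}ᶜ, ?_, ?_, ?_⟩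
  · exact (isOpen_biInter_finset fun i _ => hUo i).inter
      (hKusc _ (isClosed_compl_iff.2 (isOpen_biUnion fun i _ => hVo i))).isOpen_compl
  · refine ⟨mem_biInter fun i _ => hxU i, fun h => ?_⟩
    obtain ⟨z, hz1, hz2⟩ := h
    exact hz2 (ht hz1)
  · rintro x ⟨hx1, hx2⟩
    obtain ⟨z, hz, heq, -⟩ := aux_attained hKne hKcomp hθc x
    have hzV : z ∈ ⋃ i ∈ t, Vf i := by
      by_contra h; exact hx2 ⟨z, hz, h⟩
    obtain ⟨i, hi, hziV⟩ := mem_iUnion₂.1 hzV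
    have := hlt i (x, z) ⟨⟨mem_iInter₂.1 hx1 i hi, hziV⟩, hz⟩
    rw [← heq]; exact this

lemma aux_lsc (hKne : ∀ x, (K x).Nonempty) (hKcomp : ∀ x, IsCompact (K x))
    (hKlsc : ∀ G : Set Y, IsOpen G → IsOpen {x | (K x ∩ G).Nonempty})
    (hθc : ContinuousOn θ (corrGraph K))
    (x₀ : X) (c : ℝ) (hc : c < sSup ((fun z => θ (x₀, z)) '' K x₀)) :
    ∃ U, IsOpen U ∧ x₀ ∈ U ∧ ∀ x ∈ U, c < sSup ((fun z => θ (x, z)) '' K x) := by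
  obtain ⟨z, hz, heq, -⟩ := aux_attained hKne hKcomp hθc x₀
  have hgt : θ (x₀, z) ∈ Ioi c := by rw [mem_Ioi, heq]; exact hc
  obtain ⟨U, V, hUo, hVo, hxU, hzV, h⟩ := aux_rect hθc x₀ z hz isOpen_Ioi hgt
  refine ⟨U ∩ {x | (K x ∩ V).Nonempty}, hUo.inter (hKlsc V hVo), ⟨hxU, z, hz, hzV⟩, ?_⟩
  rintro x ⟨hxU', z', hz'K, hz'V⟩
  obtain ⟨-, -, -, hb⟩ := aux_attained hKne hKcomp hθc x
  exact lt_of_lt_of_le (h (x, z') ⟨⟨hxU', hz'V⟩, hz'K⟩) (hb z' hz'K)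

lemma aux_open {α : Type*} [TopologicalSpace α] {S T : Set α}
    (h : ∀ p ∈ S, ∃ N, IsOpen N ∧ p ∈ N ∧ N ∩ T ⊆ S) (hST : S ⊆ T) :
    ∃ O, IsOpen O ∧ S = O ∩ T := by
  choose! N hNo hNmem hNsub using h
  refine ⟨⋃ p ∈ S, N p, isOpen_biUnion fun p hp => hNo p hp, ?_⟩
  ext q
  constructor
  · intro hq; exact ⟨mem_biUnion hq (hNmem q hq), hST hq⟩
  · rintro ⟨hq1, hq2⟩
    obtain ⟨p, hp, hqN⟩ := mem_iUnion₂.1 hq1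
    exact hNsub p hp ⟨hqN, hq2⟩

end Aux

/-- If `K : X ⇉ Y` is a continuous correspondence with nonempty compact values whose
graph is a normal space, `M` has nonempty values with `M x ⊆ K x`, and there is a
function `θ : X × Y → [0,1]`, continuous on `gra K`, realizing `M` as the argmax
correspondence of `θ` over `K`, then `gra M` is closed in the subspace `gra K` and a
`Gδ` subset of the subspace `gra K`. -/
theorem inverse_maximum_a_implies_b
    {X Y : Type*} [TopologicalSpace X] [T2Space X] [TopologicalSpace Y] [T2Space Y]
    (K M : X → Set Y)
    (hKne : ∀ x, (K x).Nonempty) (hKcomp : ∀ x, IsCompact (K x))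
    (hKlsc : ∀ G : Set Y, IsOpen G → IsOpen {x | (K x ∩ G).Nonempty})
    (hKusc : ∀ F : Set Y, IsClosed F → IsClosed {x | (K x ∩ F).Nonempty})
    (hnormal : NormalSpace (corrGraph K))
    (hMne : ∀ x, (M x).Nonempty) (hMK : ∀ x, M x ⊆ K x)
    (θ : X × Y → ℝ)
    (hθc : ContinuousOn θ (corrGraph K))
    (hθ01 : ∀ p ∈ corrGraph K, θ p ∈ Icc (0 : ℝ) 1)
    (hargmax : corrGraph M =
      {p ∈ corrGraph K | θ p = sSup ((fun z => θ (p.1, z)) '' K p.1)}) :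
    (∃ C : Set (X × Y), IsClosed C ∧ corrGraph M = C ∩ corrGraph K) ∧
    (∃ U : ℕ → Set (X × Y), (∀ n, IsOpen (U n)) ∧
      corrGraph M = corrGraph K ∩ ⋂ n, U n) := by
  set m : X → ℝ := fun x => sSup ((fun z => θ (x, z)) '' K x) with hm
  have hble : ∀ p ∈ corrGraph K, θ p ≤ m p.1 := by
    intro p hp
    obtain ⟨-, -, -, hb⟩ := aux_attained hKne hKcomp hθc p.1
    exact hb p.2 hp
  constructor
  · -- closed part
    have hS : ∃ O : Set (X × Y), IsOpen O ∧
        {p ∈ corrGraph K | θ p < m p.1} = O ∩ corrGraph K := by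
      apply aux_open (T := corrGraph K) ?_ (fun p hp => hp.1)
      rintro p₀ ⟨hp₀K, hp₀lt⟩
      obtain ⟨c, hc1, hc2⟩ := exists_between hp₀lt
      obtain ⟨U, V, hUo, hVo, hxU, hyV, hθlt⟩ :=
        aux_rect hθc p₀.1 p₀.2 hp₀K isOpen_Iio hc1
      obtain ⟨W, hWo, hxW, hWlt⟩ := aux_lsc hKne hKcomp hKlsc hθc p₀.1 c hc2
      refine ⟨(U ∩ W) ×ˢ V, ((hUo.inter hWo).prod hVo), ⟨⟨hxU, hxW⟩, hyV⟩, ?_⟩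
      rintro p ⟨⟨⟨hpU, hpW⟩, hpV⟩, hpK⟩
      exact ⟨hpK, lt_trans (hθlt p ⟨⟨hpU, hpV⟩, hpK⟩) (hWlt p.1 hpW)⟩
    obtain ⟨O, hOo, hOeq⟩ := hS
    refine ⟨Oᶜ, hOo.isClosed_compl, ?_⟩
    ext p
    rw [hargmax]
    constructor
    · rintro ⟨hpK, hpe⟩
      refine ⟨fun hpO => ?_, hpK⟩
      have hmem : p ∈ {p ∈ corrGraph K | θ p < m p.1} := by
        rw [hOeq]; exact ⟨hpO, hpK⟩
      exact absurd hmem.2 (by rw [hpe]; exact lt_irrefl _)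
    · rintro ⟨hpO, hpK⟩
      refine ⟨hpK, le_antisymm (hble p hpK) ?_⟩
      by_contra h
      have hlt : θ p < m p.1 := lt_of_le_of_ne (hble p hpK) (fun he => h (he ▸ le_refl _))
      have hmem : p ∈ O ∩ corrGraph K := by
        rw [← hOeq]; exact ⟨hpK, hlt⟩
      exact hpO hmem.1
  · -- Gδ part
    have hS : ∀ n : ℕ, ∃ O : Set (X × Y), IsOpen O ∧
        {p ∈ corrGraph K | m p.1 - θ p < 1 / (n + 1)} = O ∩ corrGraph K := by
      intro n
      apply aux_open (T := corrGraph K) ?_ (fun p hp => hp.1)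
      rintro p₀ ⟨hp₀K, hp₀lt⟩
      have hε : (0 : ℝ) < 1 / (n + 1) := by positivity
      obtain ⟨a, ha1, ha2⟩ := exists_between (show m p₀.1 < θ p₀ + 1 / (n + 1) by linarith)
      obtain ⟨W, hWo, hxW, hWlt⟩ := aux_usc hKne hKcomp hKusc hθc p₀.1 a ha1
      have hgt : θ p₀ ∈ Ioi (a - 1 / (n + 1)) := by rw [mem_Ioi]; linarith
      obtain ⟨U, V, hUo, hVo, hxU, hyV, hθgt⟩ :=
        aux_rect hθc p₀.1 p₀.2 hp₀K isOpen_Ioi hgt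
      refine ⟨(U ∩ W) ×ˢ V, ((hUo.inter hWo).prod hVo), ⟨⟨hxU, hxW⟩, hyV⟩, ?_⟩
      rintro p ⟨⟨⟨hpU, hpW⟩, hpV⟩, hpK⟩
      have h1 : a - 1 / (n + 1) < θ p := hθgt p ⟨⟨hpU, hpV⟩, hpK⟩
      have h2 : m p.1 < a := hWlt p.1 hpW
      exact ⟨hpK, by linarith⟩
    choose U hUo hUeq using hS
    refine ⟨U, hUo, ?_⟩
    ext p
    rw [hargmax]
    constructor
    · rintro ⟨hpK, hpe⟩
      refine ⟨hpK, mem_iInter.2 fun n => ?_⟩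
      have hε : (0 : ℝ) < 1 / (n + 1) := by positivity
      have hmem : p ∈ U n ∩ corrGraph K := by
        rw [← hUeq n]
        exact ⟨hpK, by rw [hpe]; simpa [hm] using hε⟩
      exact hmem.1
    · rintro ⟨hpK, hpU⟩
      refine ⟨hpK, le_antisymm (hble p hpK) ?_⟩
      by_contra h
      push_neg at h
      have hd : 0 < m p.1 - θ p := by linarith
      obtain ⟨n, hn⟩ := exists_nat_one_div_lt hd
      have hmem : p ∈ {p ∈ corrGraph K | m p.1 - θ p < 1 / (n + 1)} := by
        rw [hUeq n]; exact ⟨mem_iInter.1 hpU n, hpK⟩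
      have := hmem.2
      linarith
end

section
/- Let X and Y be Hausdorff topological spaces, K : X ⇉ Y a continuous correspondence with nonempty compact values whose graph gra(K), with the subspace topology of X × Y, is a normal topological space, and M : X ⇉ Y a correspondence with nonempty values such that M(x) ⊆ K(x) for all x ∈ X. If gra(M) is a closed subset of the subspace gra(K) and a Gδ subset of the subspace gra(K) (i.e. there is a countable family (Uₙ) of open subsets of X × Y with gra(M) = gra(K) ∩ ⋂ₙ Uₙ), then there exists a function θ : X × Y → [0,1], continuous on gra(K), such that gra(M) = {(x,y) ∈ gra(K) : θ(x,y) = sup_{z ∈ K(x)} θ(x,z)}. -/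
open Set

theorem closed_gdelta_zero_set {Z : Type*} [TopologicalSpace Z] [NormalSpace Z]
    {A : Set Z} (hA : IsClosed A) {V : ℕ → Set Z} (hV : ∀ n, IsOpen (V n))
    (hAV : A = ⋂ n, V n) :
    ∃ g : Z → ℝ, Continuous g ∧ (∀ z, g z ∈ Icc (0:ℝ) 1) ∧ ∀ z, g z = 0 ↔ z ∈ A := by
  have hd : ∀ n, Disjoint A (V n)ᶜ := fun n =>
    disjoint_compl_right_iff_subset.2 (hAV ▸ iInter_subset V n)
  have H : ∀ n, ∃ f : C(Z, ℝ), EqOn f 0 A ∧ EqOn f 1 (V n)ᶜ ∧ ∀ z, f z ∈ Icc (0:ℝ) 1 :=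
    fun n => exists_continuous_zero_one_of_isClosed hA (hV n).isClosed_compl (hd n)
  choose f hf0 hf1 hfIcc using H
  set u : ℕ → ℝ := fun n => 1/2/2^n with hu
  have upos : ∀ n, 0 < u n := fun n => by positivity
  have usum : Summable u := summable_geometric_two' 1
  have utsum : ∑' n, u n = 1 := tsum_geometric_two' 1
  set g : Z → ℝ := fun z => ∑' n, u n * f n z with hg
  have hbound : ∀ n z, ‖u n * f n z‖ ≤ u n := by
    intro n z
    rw [Real.norm_eq_abs, abs_of_nonneg (mul_nonneg (upos n).le (hfIcc n z).1)]
    exact mul_le_of_le_one_right (upos n).le (hfIcc n z).2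
  have hsummab : ∀ z, Summable fun n => u n * f n z := fun z =>
    Summable.of_nonneg_of_le (fun n => mul_nonneg (upos n).le (hfIcc n z).1)
      (fun n => le_of_abs_le (hbound n z)) usum
  refine ⟨g, ?_, ?_, ?_⟩
  · exact continuous_tsum (fun n => (continuous_const.mul (f n).continuous)) usum hbound
  · intro z
    constructor
    · exact tsum_nonneg fun n => mul_nonneg (upos n).le (hfIcc n z).1
    · calc g z ≤ ∑' n, u n := Summable.tsum_le_tsum
            (fun n => mul_le_of_le_one_right (upos n).le (hfIcc n z).2) (hsummab z) usum
        _ = 1 := utsum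
  · intro z
    constructor
    · intro h0
      by_contra hz
      obtain ⟨n, hn⟩ : ∃ n, z ∉ V n := by
        simpa [hAV, mem_iInter] using hz
      have : u n * f n z ≤ g z := Summable.le_tsum (hsummab z) n
        (fun m _ => mul_nonneg (upos m).le (hfIcc m z).1)
      rw [hf1 n hn, h0] at this
      simp at this
      exact absurd this (upos n).not_ge
    · intro hz
      have : ∀ n, u n * f n z = 0 := fun n => by rw [hf0 n hz]; simp
      simp [hg, this]

/-- If `K : X ⇉ Y` is a continuous correspondence with nonempty compact values whose
graph is a normal space, `M` has nonempty values with `M x ⊆ K x`, and `gra M` is a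
closed and `Gδ` subset of the subspace `gra K`, then there exists a function
`θ : X × Y → [0,1]`, continuous on `gra K`, realizing `M` as the argmax
correspondence of `θ` over `K`. -/
theorem inverse_maximum_b_implies_a
    {X Y : Type*} [TopologicalSpace X] [T2Space X] [TopologicalSpace Y] [T2Space Y]
    (K M : X → Set Y)
    (hKne : ∀ x, (K x).Nonempty) (hKcomp : ∀ x, IsCompact (K x))
    (hKlsc : ∀ G : Set Y, IsOpen G → IsOpen {x | (K x ∩ G).Nonempty})
    (hKusc : ∀ F : Set Y, IsClosed F → IsClosed {x | (K x ∩ F).Nonempty})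
    (hnormal : NormalSpace (corrGraph K))
    (hMne : ∀ x, (M x).Nonempty) (hMK : ∀ x, M x ⊆ K x)
    (hclosed : ∃ C : Set (X × Y), IsClosed C ∧ corrGraph M = C ∩ corrGraph K)
    (hGδ : ∃ U : ℕ → Set (X × Y), (∀ n, IsOpen (U n)) ∧
      corrGraph M = corrGraph K ∩ ⋂ n, U n) :
    ∃ θ : X × Y → ℝ, ContinuousOn θ (corrGraph K) ∧
      (∀ p ∈ corrGraph K, θ p ∈ Icc (0 : ℝ) 1) ∧
      corrGraph M = {p ∈ corrGraph K | θ p = sSup ((fun z => θ (p.1, z)) '' K p.1)} := by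
  obtain ⟨C, hC, hMC⟩ := hclosed
  obtain ⟨U, hUopen, hMU⟩ := hGδ
  set A : Set (corrGraph K) := Subtype.val ⁻¹' corrGraph M with hAdef
  have hAclosed : IsClosed A := by
    have h : A = Subtype.val ⁻¹' C := by
      ext z
      simp only [hAdef, mem_preimage, hMC, mem_inter_iff]
      exact ⟨fun h => h.1, fun h => ⟨h, z.2⟩⟩
    rw [h]
    exact hC.preimage continuous_subtype_val
  have hAV : A = ⋂ n, (Subtype.val ⁻¹' U n : Set (corrGraph K)) := by
    ext z
    simp only [hAdef, mem_preimage, hMU, mem_inter_iff, mem_iInter]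
    exact ⟨fun h => h.2, fun h => ⟨z.2, h⟩⟩
  obtain ⟨g, hgcont, hgIcc, hgzero⟩ := closed_gdelta_zero_set hAclosed
    (fun n => (hUopen n).preimage continuous_subtype_val) hAV
  classical
  set θ : X × Y → ℝ := fun p => if h : p ∈ corrGraph K then 1 - g ⟨p, h⟩ else 0 with hθ
  have hθval : ∀ p (h : p ∈ corrGraph K), θ p = 1 - g ⟨p, h⟩ := fun p h => dif_pos h
  have hθIcc : ∀ p ∈ corrGraph K, θ p ∈ Icc (0:ℝ) 1 := by
    intro p hp
    rw [hθval p hp]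
    have h := hgIcc ⟨p, hp⟩
    exact ⟨by linarith [h.2], by linarith [h.1]⟩
  have hθone : ∀ p (h : p ∈ corrGraph K), (θ p = 1 ↔ p ∈ corrGraph M) := by
    intro p h
    rw [hθval p h]
    have := hgzero ⟨p, h⟩
    constructor
    · intro he; exact this.1 (by linarith)
    · intro hm; rw [this.2 hm]; ring
  have hsup : ∀ x : X, sSup ((fun z => θ (x, z)) '' K x) = 1 := by
    intro x
    obtain ⟨z, hzM⟩ := hMne x
    have hzK : z ∈ K x := hMK x hzM
    have h1 : θ (x, z) = 1 := (hθone (x, z) hzK).2 hzM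
    have hmem : (1:ℝ) ∈ (fun z => θ (x, z)) '' K x := ⟨z, hzK, h1⟩
    apply le_antisymm
    · apply Real.sSup_le
      · rintro t ⟨w, hw, rfl⟩
        exact (hθIcc (x, w) hw).2
      · norm_num
    · exact le_csSup ⟨1, by rintro t ⟨w, hw, rfl⟩; exact (hθIcc (x, w) hw).2⟩ hmem
  refine ⟨θ, ?_, hθIcc, ?_⟩
  · rw [continuousOn_iff_continuous_restrict]
    have h : (corrGraph K).restrict θ = fun z => 1 - g z := by
      ext z; simp [Set.restrict, hθ, z.2]
    rw [show (corrGraph K).domRestrict θ = fun z => 1 - g z from h]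
    exact continuous_const.sub hgcont
  · ext p
    simp only [mem_setOf_eq, mem_sep_iff, hsup p.1]
    constructor
    · intro hpM
      have hpK : p ∈ corrGraph K := hMK p.1 hpM
      exact ⟨hpK, (hθone p hpK).2 hpM⟩
    · rintro ⟨hpK, he⟩
      exact (hθone p hpK).1 he
end

section
/- Let X be a Hausdorff topological space and Y a Hausdorff topological space which is also a real vector space. Let K, M : X ⇉ Y be correspondences such that M(x) is nonempty and M(x) ⊆ K(x) for all x ∈ X. Suppose there exists a family {U_t}_{t>0} of subsets of gra(K), each open in the subspace topology of gra(K), such that: (i) ⋃_{t>0} U_t = gra(K); (ii) the closure of U_s in gra(K) is contained in U_t whenever 0 < s < t; (iii) gra(M) = ⋂_{t>0} U_t; and (iv) for every t > 0 and x ∈ X, the section {y ∈ Y : (x,y) ∈ U_t} is convex. Then there exists a function θ : X × Y → [0,1], continuous on gra(K), such that (v) gra(M) = {(x,y) ∈ gra(K) : θ(x,y) = sup_{z ∈ K(x)} θ(x,z)}, and (vi) for every x ∈ X and every s > 0, the superlevel set {y ∈ Y : (x,y) ∈ gra(K) and θ(x,y) ≥ s} is convex. -/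
open Set

/-- Inverse maximum theorem with convex sections: if in addition every section
`{y : (x,y) ∈ U t}` is convex, the function `θ` can be chosen so that its superlevel
sets in the second variable (within `gra K`) are convex. -/
theorem inverse_maximum_urysohn_family_convex
    {X Y : Type*} [TopologicalSpace X] [T2Space X]
    [AddCommGroup Y] [Module ℝ Y] [TopologicalSpace Y] [T2Space Y]
    (K M : X → Set Y)
    (hMne : ∀ x, (M x).Nonempty) (hMK : ∀ x, M x ⊆ K x)
    (U : ℝ → Set (X × Y))
    (hUsub : ∀ t : ℝ, 0 < t → U t ⊆ corrGraph K)
    (hUopen : ∀ t : ℝ, 0 < t → ∃ V : Set (X × Y), IsOpen V ∧ U t = V ∩ corrGraph K)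
    (hUnion : (⋃ (t : ℝ) (_ : 0 < t), U t) = corrGraph K)
    (hUcl : ∀ s t : ℝ, 0 < s → s < t → closure (U s) ∩ corrGraph K ⊆ U t)
    (hInter : corrGraph M = ⋂ (t : ℝ) (_ : 0 < t), U t)
    (hUconv : ∀ t : ℝ, 0 < t → ∀ x : X, Convex ℝ {y : Y | (x, y) ∈ U t}) :
    ∃ θ : X × Y → ℝ, ContinuousOn θ (corrGraph K) ∧
      (∀ p ∈ corrGraph K, θ p ∈ Icc (0 : ℝ) 1) ∧
      corrGraph M = {p ∈ corrGraph K | θ p = sSup ((fun z => θ (p.1, z)) '' K p.1)} ∧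
      ∀ x : X, ∀ s : ℝ, 0 < s →
        Convex ℝ {y : Y | (x, y) ∈ corrGraph K ∧ s ≤ θ (x, y)} := by
  classical
  set S : X × Y → Set ℝ := fun p => {t | 0 < t ∧ p ∈ U t} with hSdef
  have hmono : ∀ s t : ℝ, 0 < s → s < t → U s ⊆ U t := fun s t hs hst p hp =>
    hUcl s t hs hst ⟨subset_closure hp, hUsub s hs hp⟩
  have hSne : ∀ p ∈ corrGraph K, (S p).Nonempty := by
    intro p hp
    rw [← hUnion] at hp
    simp only [mem_iUnion] at hp
    obtain ⟨t, ht, hpt⟩ := hp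
    exact ⟨t, ht, hpt⟩
  have hSbdd : ∀ p, BddBelow (S p) := fun p => ⟨0, fun t ht => ht.1.le⟩
  set τ : X × Y → ℝ := fun p => sInf (S p) with hτdef
  have hτnonneg : ∀ p, 0 ≤ τ p := fun p =>
    Real.sInf_nonneg (fun t ht => ht.1.le)
  have hmem : ∀ p ∈ corrGraph K, ∀ t : ℝ, τ p < t → p ∈ U t := by
    intro p hp t ht
    obtain ⟨t', ht'S, ht'⟩ := exists_lt_of_csInf_lt (hSne p hp) ht
    exact hmono t' t ht'S.1 ht' ht'S.2
  have hτle : ∀ p, ∀ t : ℝ, 0 < t → p ∈ U t → τ p ≤ t := fun p t ht hpt =>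
    csInf_le (hSbdd p) ⟨ht, hpt⟩
  have hnotmem : ∀ p ∈ corrGraph K, ∀ t : ℝ, 0 < t → p ∉ U t → t ≤ τ p := by
    intro p hp t ht hpt
    refine le_csInf (hSne p hp) (fun b hb => ?_)
    by_contra hlt
    push_neg at hlt
    exact hpt (hmono b t hb.1 hlt hb.2)
  -- characterization of graph of M
  have hMchar : ∀ p, p ∈ corrGraph M ↔ p ∈ corrGraph K ∧ τ p = 0 := by
    intro p
    constructor
    · intro hpM
      have hall : ∀ t : ℝ, 0 < t → p ∈ U t := by
        intro t ht
        have := hInter ▸ hpM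
        simp only [mem_iInter] at this
        exact this t ht
      have hpK : p ∈ corrGraph K := hUsub 1 one_pos (hall 1 one_pos)
      refine ⟨hpK, le_antisymm ?_ (hτnonneg p)⟩
      refine le_of_forall_pos_le_add (fun ε hε => ?_)
      simpa using hτle p ε hε (hall ε hε)
    · rintro ⟨hpK, hτ0⟩
      rw [hInter]
      simp only [mem_iInter]
      intro t ht
      exact hmem p hpK t (hτ0 ▸ ht)
  -- continuity of τ on gra K
  have hτcont : ContinuousOn τ (corrGraph K) := by
    intro p hp
    rw [ContinuousWithinAt, Metric.tendsto_nhds]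
    intro ε hε
    rw [Filter.eventually_iff, mem_nhdsWithin]
    -- upper bound neighborhood
    have hεpos : 0 < ε / 2 := by linarith
    have ht1 : τ p < τ p + ε / 2 := by linarith
    have ht1pos : 0 < τ p + ε / 2 := lt_of_le_of_lt (hτnonneg p) ht1
    obtain ⟨V, hVopen, hVeq⟩ := hUopen (τ p + ε / 2) ht1pos
    have hpV : p ∈ V := by
      have := hmem p hp _ ht1
      rw [hVeq] at this
      exact this.1
    -- lower bound neighborhood
    rcases le_or_gt (τ p) (ε / 2) with hcase | hcase
    · -- lower bound is automatic
      refine ⟨V, hVopen, hpV, ?_⟩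
      rintro q ⟨hqV, hqK⟩
      have hq1 : τ q ≤ τ p + ε / 2 := by
        refine hτle q _ ht1pos ?_
        rw [hVeq]; exact ⟨hqV, hqK⟩
      have hq2 : 0 ≤ τ q := hτnonneg q
      simp only [mem_setOf_eq, Real.dist_eq, abs_sub_lt_iff]
      constructor <;> linarith
    · -- τ p > ε/2
      have hs : (0:ℝ) < τ p - ε / 2 := by linarith
      have hpnc : p ∉ closure (U (τ p - ε / 2)) := by
        intro hcl
        have : p ∈ U (τ p - ε / 4) :=
          hUcl _ _ hs (by linarith) ⟨hcl, hp⟩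
        have := hτle p _ (by linarith) this
        linarith
      refine ⟨V ∩ (closure (U (τ p - ε / 2)))ᶜ, hVopen.inter isClosed_closure.isOpen_compl,
        ⟨hpV, hpnc⟩, ?_⟩
      rintro q ⟨⟨hqV, hqnc⟩, hqK⟩
      have hq1 : τ q ≤ τ p + ε / 2 := by
        refine hτle q _ ht1pos ?_
        rw [hVeq]; exact ⟨hqV, hqK⟩
      have hq2 : τ p - ε / 2 ≤ τ q := by
        refine hnotmem q hqK _ hs (fun hqU => hqnc (subset_closure hqU))
      simp only [mem_setOf_eq, Real.dist_eq, abs_sub_lt_iff]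
      constructor <;> linarith
  refine ⟨fun p => Real.exp (-(τ p)), ?_, ?_, ?_, ?_⟩
  · exact Real.continuous_exp.comp_continuousOn hτcont.neg
  · intro p hp
    exact ⟨(Real.exp_pos _).le, Real.exp_le_one_iff.2 (neg_nonpos.2 (hτnonneg p))⟩
  · -- the sup characterization
    ext p
    simp only [mem_setOf_eq]
    have hsup : ∀ hpK : p ∈ corrGraph K,
        sSup ((fun z => Real.exp (-(τ (p.1, z)))) '' K p.1) = 1 := by
      intro hpK
      obtain ⟨z0, hz0⟩ := hMne p.1
      have hz0M : (p.1, z0) ∈ corrGraph M := hz0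
      have hz0τ : τ (p.1, z0) = 0 := ((hMchar _).1 hz0M).2
      have hbdd : ∀ a ∈ (fun z => Real.exp (-(τ (p.1, z)))) '' K p.1, a ≤ 1 := by
        rintro a ⟨z, hz, rfl⟩
        exact Real.exp_le_one_iff.2 (neg_nonpos.2 (hτnonneg _))
      refine le_antisymm (csSup_le ⟨_, mem_image_of_mem _ (hMK p.1 hz0)⟩ hbdd) ?_
      have h1 : (1:ℝ) ∈ (fun z => Real.exp (-(τ (p.1, z)))) '' K p.1 := by
        refine ⟨z0, hMK p.1 hz0, ?_⟩
        simp [hz0τ]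
      exact le_csSup ⟨1, hbdd⟩ h1
    constructor
    · intro hpM
      obtain ⟨hpK, hτ0⟩ := (hMchar p).1 hpM
      refine ⟨hpK, ?_⟩
      rw [hsup hpK, hτ0]
      simp
    · rintro ⟨hpK, heq⟩
      rw [hsup hpK] at heq
      have hτ0 : τ p = 0 := by
        have h := (Real.exp_eq_one_iff (-(τ p))).1 heq
        linarith
      exact (hMchar p).2 ⟨hpK, hτ0⟩
  · -- convexity of superlevel sets
    intro x s hs
    rcases le_or_gt s 1 with hs1 | hs1
    · have hc : 0 ≤ -Real.log s := by
        simp only [neg_nonneg]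
        exact Real.log_nonpos hs.le hs1
      have hset : {y : Y | (x, y) ∈ corrGraph K ∧ s ≤ Real.exp (-(τ (x, y)))} =
          ⋂ (t : ℝ) (_ : -Real.log s < t), {y : Y | (x, y) ∈ U t} := by
        ext y
        simp only [mem_setOf_eq, mem_iInter]
        constructor
        · rintro ⟨hyK, hyθ⟩ t ht
          have hτc : τ (x, y) ≤ -Real.log s := by
            have : Real.log s ≤ -(τ (x, y)) := (Real.log_le_iff_le_exp hs).2 hyθ
            linarith
          exact hmem (x, y) hyK t (lt_of_le_of_lt hτc ht)
        · intro hy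
          have hyK : (x, y) ∈ corrGraph K :=
            hUsub _ (by linarith : (0:ℝ) < -Real.log s + 1) (hy _ (by linarith))
          refine ⟨hyK, ?_⟩
          have hτc : τ (x, y) ≤ -Real.log s := by
            refine le_of_forall_pos_le_add (fun ε hε => ?_)
            exact hτle (x, y) _ (by linarith) (hy _ (by linarith))
          have : Real.log s ≤ -(τ (x, y)) := by linarith
          exact (Real.log_le_iff_le_exp hs).1 this
      rw [hset]
      exact convex_iInter fun t => convex_iInter fun ht =>
        hUconv t (lt_of_le_of_lt hc ht) x
    · have hset : {y : Y | (x, y) ∈ corrGraph K ∧ s ≤ Real.exp (-(τ (x, y)))} = ∅ := by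
        ext y
        simp only [mem_setOf_eq, mem_empty_iff_false, iff_false, not_and]
        intro hyK hyθ
        have : Real.exp (-(τ (x, y))) ≤ 1 :=
          Real.exp_le_one_iff.2 (neg_nonpos.2 (hτnonneg _))
        linarith
      rw [hset]
      exact convex_empty
end

section
/- Let X and Y be real normed spaces, D a nonempty convex subset of X, and M : D ⇉ Y a correspondence with nonempty values whose graph gra(M) is a convex subset of X × Y and is closed in D × Y (with the subspace topology of X × Y). Then there exists a continuous function θ : D × Y → [0,1] such that (i) gra(M) = {(x,y) ∈ D × Y : θ(x,y) = sup_{z ∈ Y} θ(x,z)}, and (ii) for every x ∈ D, the function θ(x,·) : Y → [0,1] is quasi-concave. -/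
open Set

lemma aux_infDist_le_iff_mem_cthickening {α : Type*} [PseudoMetricSpace α]
    {s : Set α} (hs : s.Nonempty) {x : α} {δ : ℝ} (hδ : 0 ≤ δ) :
    Metric.infDist x s ≤ δ ↔ x ∈ Metric.cthickening δ s := by
  rw [Metric.mem_cthickening_iff, Metric.infDist]
  rw [ENNReal.le_ofReal_iff_toReal_le (Metric.infEdist_ne_top hs) hδ]

/-- Inverse maximum theorem for correspondences with convex closed graph on normed
spaces: if `M : D ⇉ Y` has nonempty values, its graph is convex and closed in the
subspace `D × Y`, then there is a continuous `θ : D × Y → [0,1]` realizing `M` as the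
argmax correspondence over `Y`, with `θ (x, ·)` quasi-concave for every `x ∈ D`. -/
theorem inverse_maximum_convex_graph
    {X Y : Type*} [NormedAddCommGroup X] [NormedSpace ℝ X]
    [NormedAddCommGroup Y] [NormedSpace ℝ Y]
    (D : Set X) (hDne : D.Nonempty) (hDconv : Convex ℝ D)
    (M : X → Set Y) (hMne : ∀ x ∈ D, (M x).Nonempty)
    (hgraconv : Convex ℝ {p : X × Y | p.1 ∈ D ∧ p.2 ∈ M p.1})
    (hgraclosed : closure {p : X × Y | p.1 ∈ D ∧ p.2 ∈ M p.1} ∩ D ×ˢ (univ : Set Y) ⊆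
      {p : X × Y | p.1 ∈ D ∧ p.2 ∈ M p.1}) :
    ∃ θ : X × Y → ℝ, ContinuousOn θ (D ×ˢ (univ : Set Y)) ∧
      (∀ p ∈ D ×ˢ (univ : Set Y), θ p ∈ Icc (0 : ℝ) 1) ∧
      {p : X × Y | p.1 ∈ D ∧ p.2 ∈ M p.1} =
        {p ∈ D ×ˢ (univ : Set Y) | θ p = sSup (range fun z => θ (p.1, z))} ∧
      ∀ x ∈ D, ∀ c : ℝ, Convex ℝ {y : Y | c ≤ θ (x, y)} := by
  set G : Set (X × Y) := {p : X × Y | p.1 ∈ D ∧ p.2 ∈ M p.1} with hG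
  obtain ⟨x₀, hx₀⟩ := hDne
  obtain ⟨y₀, hy₀⟩ := hMne x₀ hx₀
  have hGne : G.Nonempty := ⟨(x₀, y₀), hx₀, hy₀⟩
  set θ : X × Y → ℝ := fun p => max 0 (1 - Metric.infDist p G) with hθ
  have hcont : Continuous θ :=
    continuous_const.max (continuous_const.sub (Metric.continuous_infDist_pt G))
  have hle1 : ∀ p, θ p ≤ 1 := by
    intro p
    have h0 : 0 ≤ Metric.infDist p G := Metric.infDist_nonneg
    simp only [hθ, max_le_iff]
    constructor <;> linarith
  have hmem1 : ∀ p ∈ G, θ p = 1 := by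
    intro p hp
    simp [hθ, Metric.infDist_zero_of_mem hp]
  have hsup : ∀ x ∈ D, sSup (range fun z => θ (x, z)) = 1 := by
    intro x hx
    obtain ⟨y, hy⟩ := hMne x hx
    refine IsGreatest.csSup_eq ⟨⟨y, ?_⟩, ?_⟩
    · exact hmem1 (x, y) ⟨hx, hy⟩
    · rintro r ⟨z, rfl⟩; exact hle1 _
  refine ⟨θ, hcont.continuousOn, fun p _ => ⟨le_max_left _ _, hle1 p⟩, ?_, ?_⟩
  · ext p
    constructor
    · rintro ⟨hp1, hp2⟩
      refine ⟨⟨hp1, mem_univ _⟩, ?_⟩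
      rw [hsup p.1 hp1, hmem1 p ⟨hp1, hp2⟩]
    · rintro ⟨⟨hp1, -⟩, heq⟩
      rw [hsup p.1 hp1] at heq
      have hd : Metric.infDist p G = 0 := by
        by_contra h
        have hpos : 0 < Metric.infDist p G :=
          lt_of_le_of_ne Metric.infDist_nonneg (Ne.symm h)
        have : θ p < 1 := by
          simp only [hθ, max_lt_iff]
          constructor <;> linarith
        exact absurd heq (ne_of_lt this)
      have hcl : p ∈ closure G := (Metric.mem_closure_iff_infDist_zero hGne).2 hd
      exact hgraclosed ⟨hcl, hp1, mem_univ _⟩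
  · intro x hx c
    rcases le_or_gt c 0 with hc | hc
    · have : {y : Y | c ≤ θ (x, y)} = univ := by
        ext y; simp only [mem_setOf_eq, mem_univ, iff_true]
        exact hc.trans (le_max_left _ _)
      rw [this]; exact convex_univ
    rcases le_or_gt c 1 with hc1 | hc1
    · have hkey : {y : Y | c ≤ θ (x, y)} =
          (fun y : Y => ((x : X), y)) ⁻¹' Metric.cthickening (1 - c) G := by
        ext y
        simp only [mem_setOf_eq, mem_preimage]
        rw [← aux_infDist_le_iff_mem_cthickening hGne (by linarith)]
        constructor
        · intro h
          have h' : c ≤ max 0 (1 - Metric.infDist (x, y) G) := h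
          have : c ≤ 1 - Metric.infDist (x, y) G := by
            rcases max_cases 0 (1 - Metric.infDist (x, y) G) with ⟨he, _⟩ | ⟨he, _⟩
            · rw [he] at h'; linarith
            · rwa [he] at h'
          linarith
        · intro h
          have : c ≤ 1 - Metric.infDist (x, y) G := by linarith
          exact this.trans (le_max_right _ _)
      rw [hkey]
      intro y₁ hy₁ y₂ hy₂ a b ha hb hab
      have hconv := hgraconv.cthickening (1 - c)
      have := hconv hy₁ hy₂ ha hb hab
      simp only [mem_preimage] at *
      have heq : a • ((x : X), y₁) + b • ((x : X), y₂) = (x, a • y₁ + b • y₂) := by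
        simp [Prod.smul_mk, Prod.mk_add_mk, Convex.combo_self hab]
      rwa [heq] at this
    · have : {y : Y | c ≤ θ (x, y)} = ∅ := by
        ext y; simp only [mem_setOf_eq, mem_empty_iff_false, iff_false, not_le]
        exact lt_of_le_of_lt (hle1 _) hc1
      rw [this]; exact convex_empty
end

section
/- Let X be a nonempty paracompact Hausdorff topological space, E a Hausdorff locally convex real topological vector space, Y a nonempty convex compact subset of E, and M : X ⇉ Y an upper semicontinuous correspondence with nonempty convex compact values. Then the following two conditions are equivalent: (i) there exists a continuous function θ : X × Y → [0,1] such that gra(M) = {(x,y) ∈ X × Y : θ(x,y) = sup_{z ∈ Y} θ(x,z)} and for each x ∈ X the function θ(x,·) : Y → [0,1] is quasi-concave; (ii) gra(M) is a Gδ subset of X × Y. -/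
open Set

set_option linter.unusedSectionVars false

open Set

section Aux

set_option linter.unusedSectionVars false
variable {E : Type*} [AddCommGroup E] [Module ℝ E] [TopologicalSpace E]
  [IsTopologicalAddGroup E] [ContinuousSMul ℝ E]

/-- clamped affine function of a linear functional -/
noncomputable def imtClamp (ℓ : E →L[ℝ] ℝ) (s u : ℝ) : E → ℝ :=
  fun y => max 0 (min 1 ((u - ℓ y) / (u - s)))

lemma imtClamp_cont (ℓ : E →L[ℝ] ℝ) (s u : ℝ) : Continuous (imtClamp ℓ s u) := by
  unfold imtClamp
  exact continuous_const.max (continuous_const.min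
    ((continuous_const.sub ℓ.continuous).div_const _))

lemma imtClamp_mem_Icc (ℓ : E →L[ℝ] ℝ) (s u : ℝ) (y : E) :
    imtClamp ℓ s u y ∈ Icc (0:ℝ) 1 := by
  unfold imtClamp
  constructor
  · exact le_max_left _ _
  · exact max_le zero_le_one (min_le_left _ _)

lemma imtClamp_eq_one (ℓ : E →L[ℝ] ℝ) {s u : ℝ} (hsu : s < u) {y : E}
    (hy : ℓ y ≤ s) : imtClamp ℓ s u y = 1 := by
  unfold imtClamp
  have h1 : (1:ℝ) ≤ (u - ℓ y) / (u - s) := by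
    rw [le_div_iff₀ (by linarith)]
    linarith
  rw [min_eq_left h1, max_eq_right zero_le_one]

lemma imtClamp_lt_one (ℓ : E →L[ℝ] ℝ) {s u : ℝ} (hsu : s < u) {y : E}
    (hy : s < ℓ y) : imtClamp ℓ s u y < 1 := by
  unfold imtClamp
  have h1 : (u - ℓ y) / (u - s) < 1 := by
    rw [div_lt_one (by linarith)]
    linarith
  have : min 1 ((u - ℓ y) / (u - s)) < 1 := lt_of_le_of_lt (min_le_right _ _) h1
  exact max_lt one_pos this

lemma imtClamp_convex (ℓ : E →L[ℝ] ℝ) {s u : ℝ} (hsu : s < u) (c : ℝ) :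
    Convex ℝ {y | c ≤ imtClamp ℓ s u y} := by
  have hus : (0:ℝ) < u - s := by linarith
  by_cases hc : c ≤ 0
  · have : {y | c ≤ imtClamp ℓ s u y} = univ := by
      ext y; simp only [mem_setOf_eq, mem_univ, iff_true]
      exact hc.trans (imtClamp_mem_Icc ℓ s u y).1
    rw [this]; exact convex_univ
  push_neg at hc
  by_cases hc1 : c ≤ 1
  · have : {y | c ≤ imtClamp ℓ s u y} = {y | c * (u - s) ≤ u - ℓ y} := by
      ext y
      simp only [mem_setOf_eq, imtClamp, le_max_iff, le_min_iff]
      constructor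
      · rintro (h | ⟨-, h⟩)
        · linarith
        · rw [le_div_iff₀ hus] at h
          linarith
      · intro h
        right
        refine ⟨hc1, (le_div_iff₀ hus).2 ?_⟩
        linarith
    rw [this]
    have : Convex ℝ {y : E | ℓ y ≤ u - c * (u - s)} :=
      convex_halfSpace_le ⟨map_add ℓ, map_smul ℓ⟩ _
    convert this using 1
    ext y; simp only [mem_setOf_eq]; constructor <;> intro h <;> linarith
  · have : {y | c ≤ imtClamp ℓ s u y} = ∅ := by
      ext y; simp only [mem_setOf_eq, mem_empty_iff_false, iff_false, not_le]
      exact lt_of_le_of_lt (imtClamp_mem_Icc ℓ s u y).2 (by linarith)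
    rw [this]; exact convex_empty
end Aux

section Main

variable {X E : Type*} [TopologicalSpace X] [T2Space X] [ParacompactSpace X] [Nonempty X]
    [AddCommGroup E] [Module ℝ E] [TopologicalSpace E] [IsTopologicalAddGroup E]
    [ContinuousSMul ℝ E] [LocallyConvexSpace ℝ E] [T2Space E]

lemma imt_perpoint (Y : Set E) (hYcomp : IsCompact Y)
    (M : X → Set E) (hMconv : ∀ x, Convex ℝ (M x)) (hMcomp : ∀ x, IsCompact (M x))
    (hMusc : ∀ F : Set E, IsClosed F → IsClosed {x | (M x ∩ F).Nonempty})
    (U : Set (X × E)) (hU : IsOpen U) (hGU : ∀ x, ∀ y ∈ M x, (x, y) ∈ U) (x₀ : X) :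
    ∃ (O : Set X) (cap : E → ℝ), IsOpen O ∧ x₀ ∈ O ∧ Continuous cap ∧
      (∀ y, cap y ∈ Icc (0:ℝ) 1) ∧ (∀ c : ℝ, Convex ℝ {y | c ≤ cap y}) ∧
      (∀ x ∈ O, ∀ y ∈ M x, cap y = 1) ∧
      (∀ x ∈ O, ∀ y ∈ Y, (x, y) ∉ U → cap y < 1) := by
  classical
  set K : Set E := {y ∈ Y | (x₀, y) ∉ U} with hK_def
  have hKcl : IsClosed K := by
    have : K = Y ∩ (fun y => ((x₀, y) : X × E)) ⁻¹' Uᶜ := by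
      ext y; simp [hK_def]
    rw [this]
    exact hYcomp.isClosed.inter (hU.isClosed_compl.preimage (Continuous.prodMk_right x₀))
  have hKcomp : IsCompact K := hYcomp.of_isClosed_subset hKcl (by
    intro y hy; exact hy.1)
  by_cases hKne : K.Nonempty
  swap
  · -- K empty: the whole slice is in U, use tube lemma with Y
    have hsub : ({x₀} : Set X) ×ˢ Y ⊆ U := by
      rintro ⟨x, y⟩ ⟨hx, hy⟩
      simp only [mem_singleton_iff] at hx
      subst hx
      by_contra hnot
      exact hKne ⟨y, hy, hnot⟩
    obtain ⟨O, v, hO, hv, hxO, hYv, hOv⟩ :=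
      generalized_tube_lemma isCompact_singleton hYcomp hU hsub
    refine ⟨O, fun _ => 1, hO, hxO rfl, continuous_const, fun y => ⟨zero_le_one, le_refl 1⟩,
      ?_, fun _ _ _ _ => rfl, ?_⟩
    · intro c
      by_cases hc : c ≤ (1:ℝ)
      · have : {y : E | c ≤ (1:ℝ)} = univ := by ext y; simp [hc]
        rw [this]; exact convex_univ
      · have : {y : E | c ≤ (1:ℝ)} = ∅ := by ext y; simp [hc]
        rw [this]; exact convex_empty
    · intro x hx y hy hnU
      exact absurd (hOv ⟨hx, hYv hy⟩) hnU
  · -- K nonempty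
    have hMx₀cl : IsClosed (M x₀) := (hMcomp x₀).isClosed
    have hsep : ∀ k : K, ∃ (ℓ : E →L[ℝ] ℝ) (s : ℝ),
        (∀ a ∈ M x₀, ℓ a < s) ∧ s < ℓ (k : E) := by
      rintro ⟨k, hkY, hkU⟩
      have hkM : k ∉ M x₀ := fun h => hkU (hGU x₀ k h)
      exact geometric_hahn_banach_closed_point (hMconv x₀) hMx₀cl hkM
    choose ℓ s hℓs hsℓ using hsep
    set u : K → ℝ := fun k => (s k + ℓ k k) / 2 with hu_def
    have hsu : ∀ k : K, s k < u k := fun k => by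
      have := hsℓ k; simp only [hu_def]; linarith
    have huℓ : ∀ k : K, u k < ℓ k k := fun k => by
      have := hsℓ k; simp only [hu_def]; linarith
    set N : K → Set E := fun k => {y | u k < ℓ k y} with hN_def
    have hNopen : ∀ k : K, IsOpen (N k) := fun k =>
      isOpen_lt continuous_const (ℓ k).continuous
    have hcover : K ⊆ ⋃ k : K, N k := fun y hy =>
      mem_iUnion.2 ⟨⟨y, hy⟩, huℓ ⟨y, hy⟩⟩
    obtain ⟨t, ht⟩ := hKcomp.elim_finite_subcover N hNopen hcover
    have htne : t.Nonempty := by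
      obtain ⟨k₀, hk₀⟩ := hKne
      have := ht hk₀
      simp only [mem_iUnion, exists_prop] at this
      obtain ⟨i, hit, -⟩ := this
      exact ⟨i, hit⟩
    -- the cap function
    set cap : E → ℝ := fun y => t.inf' htne (fun k => imtClamp (ℓ k) (s k) (u k) y)
      with hcap_def
    have hcapcont : Continuous cap :=
      Continuous.finset_inf'_apply htne (fun i _ => imtClamp_cont _ _ _)
    have hcapIcc : ∀ y, cap y ∈ Icc (0:ℝ) 1 := by
      intro y
      constructor
      · exact Finset.le_inf' htne _ (fun i _ => (imtClamp_mem_Icc _ _ _ y).1)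
      · obtain ⟨i₀, hi₀⟩ := htne
        exact (Finset.inf'_le _ hi₀).trans (imtClamp_mem_Icc _ _ _ y).2
    have hcapconv : ∀ c : ℝ, Convex ℝ {y | c ≤ cap y} := by
      intro c
      have : {y | c ≤ cap y} = ⋂ i ∈ t, {y | c ≤ imtClamp (ℓ i) (s i) (u i) y} := by
        ext y
        simp only [mem_setOf_eq, mem_iInter, hcap_def, Finset.le_inf'_iff]
      rw [this]
      exact convex_iInter fun i => convex_iInter fun _ => imtClamp_convex _ (hsu i) c
    -- tube lemma for Q
    set Q : Set E := {y ∈ Y | ∀ i ∈ t, ℓ i y ≤ s i} with hQ_def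
    have hQcl : IsClosed Q := by
      have : Q = Y ∩ ⋂ i ∈ t, {y | ℓ i y ≤ s i} := by
        ext y; simp [hQ_def]
      rw [this]
      exact hYcomp.isClosed.inter (isClosed_biInter fun i _ =>
        isClosed_le (ℓ i).continuous continuous_const)
    have hQcomp : IsCompact Q := hYcomp.of_isClosed_subset hQcl (fun y hy => hy.1)
    have hQU : ({x₀} : Set X) ×ˢ Q ⊆ U := by
      rintro ⟨x, y⟩ ⟨hx, hyQ⟩
      simp only [mem_singleton_iff] at hx
      subst hx
      by_contra hnot
      have hyK : y ∈ K := ⟨hyQ.1, hnot⟩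
      have := ht hyK
      simp only [mem_iUnion, exists_prop] at this
      obtain ⟨i, hit, hiN⟩ := this
      have : ℓ i y ≤ s i := hyQ.2 i hit
      have := hsu i
      simp only [hN_def, mem_setOf_eq] at hiN
      linarith
    obtain ⟨O₁, v, hO₁, hv, hxO₁, hQv, hOv⟩ :=
      generalized_tube_lemma isCompact_singleton hQcomp hU hQU
    -- the usc neighborhoods
    set B : K → Set X := fun i => {x | (M x ∩ {z | s i ≤ ℓ i z}).Nonempty} with hB_def
    have hBcl : ∀ i : K, IsClosed (B i) :=
      fun i => hMusc _ (isClosed_le continuous_const (ℓ i).continuous)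
    have hx₀B : ∀ i : K, x₀ ∉ B i := by
      rintro i ⟨z, hzM, hzs⟩
      exact absurd (hℓs i z hzM) (not_lt.2 hzs)
    set O : Set X := O₁ ∩ ⋂ i ∈ t, (B i)ᶜ with hO_def
    have hOopen : IsOpen O :=
      hO₁.inter (isOpen_biInter_finset fun i _ => (hBcl i).isOpen_compl)
    have hx₀O : x₀ ∈ O := ⟨hxO₁ rfl, mem_biInter fun i _ => hx₀B i⟩
    refine ⟨O, cap, hOopen, hx₀O, hcapcont, hcapIcc, hcapconv, ?_, ?_⟩
    · -- cap = 1 on M x for x ∈ O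
      intro x hx y hy
      have hle : cap y ≤ 1 := (hcapIcc y).2
      refine le_antisymm hle (Finset.le_inf' htne _ fun i hit => ?_)
      have hxB : x ∉ B i := by
        have := hx.2
        rw [mem_iInter₂] at this
        exact this i hit
      have : ℓ i y < s i := by
        by_contra hcon
        exact hxB ⟨y, hy, not_lt.1 hcon⟩
      rw [imtClamp_eq_one (ℓ i) (hsu i) this.le]
    · -- cap < 1 for (x,y) ∉ U
      intro x hx y hyY hnU
      have hyv : y ∉ v := fun hyv => hnU (hOv ⟨hx.1, hyv⟩)
      have hyQ : y ∉ Q := fun hyQ => hyv (hQv hyQ)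
      simp only [hQ_def, mem_setOf_eq, not_and, not_forall] at hyQ
      obtain ⟨i, hit, his⟩ := hyQ hyY
      push_neg at his
      exact lt_of_le_of_lt (Finset.inf'_le _ hit)
        (imtClamp_lt_one (ℓ i) (hsu i) his)

lemma imt_core (Y : Set E) (hYcomp : IsCompact Y)
    (M : X → Set E) (hMconv : ∀ x, Convex ℝ (M x)) (hMcomp : ∀ x, IsCompact (M x))
    (hMusc : ∀ F : Set E, IsClosed F → IsClosed {x | (M x ∩ F).Nonempty})
    (U : Set (X × E)) (hU : IsOpen U) (hGU : ∀ x, ∀ y ∈ M x, (x, y) ∈ U) :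
    ∃ ψ : X × E → ℝ, Continuous ψ ∧ (∀ p, ψ p ∈ Icc (0:ℝ) 1) ∧
      (∀ x, ∀ y ∈ M x, ψ (x, y) = 1) ∧
      (∀ x, ∀ y ∈ Y, (x, y) ∉ U → ψ (x, y) < 1) ∧
      (∀ x : X, ∀ c : ℝ, Convex ℝ {y | c ≤ ψ (x, y)}) := by
  classical
  choose O cap hOopen hxO hcapcont hcapIcc hcapconv hcapone hcaplt using
    imt_perpoint Y hYcomp M hMconv hMcomp hMusc U hU hGU
  obtain ⟨f, hf⟩ := PartitionOfUnity.exists_isSubordinate isClosed_univ O hOopen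
    (fun x _ => mem_iUnion.2 ⟨x, hxO x⟩)
  set term : X → X × E → ℝ := fun i p => max (cap i p.2) (1 - f i p.1) with hterm_def
  have hterm_nonneg : ∀ i p, 0 ≤ term i p :=
    fun i p => le_trans (hcapIcc i p.2).1 (le_max_left _ _)
  have hterm_le_one : ∀ i p, term i p ≤ 1 := by
    intro i p
    exact max_le (hcapIcc i p.2).2 (by linarith [f.nonneg i p.1])
  have hbdd : ∀ p : X × E, BddBelow (range fun i => term i p) := by
    intro p
    exact ⟨0, by rintro a ⟨i, rfl⟩; exact hterm_nonneg i p⟩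
  set ψ : X × E → ℝ := fun p => ⨅ i : X, term i p with hψ_def
  have hψ_le : ∀ p (i : X), ψ p ≤ term i p := fun p i => ciInf_le (hbdd p) i
  have hψIcc : ∀ p, ψ p ∈ Icc (0:ℝ) 1 := by
    intro p
    constructor
    · exact le_ciInf fun i => hterm_nonneg i p
    · exact (hψ_le p (Classical.arbitrary X)).trans (hterm_le_one _ p)
  have hterm_cont : ∀ i : X, Continuous (term i) := by
    intro i
    exact ((hcapcont i).comp continuous_snd).max
      (continuous_const.sub ((f i).continuous.comp continuous_fst))
  refine ⟨ψ, ?_, hψIcc, ?_, ?_, ?_⟩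
  · -- continuity
    rw [continuous_iff_continuousAt]
    rintro ⟨x₀, y₀⟩
    obtain ⟨Nx, hNx, hfin⟩ := f.locallyFinite x₀
    set sfin : Finset X := hfin.toFinset with hsfin_def
    have hzero : ∀ x ∈ Nx, ∀ i, i ∉ sfin → f i x = 0 := by
      intro x hx i hi
      by_contra h
      exact hi (hfin.mem_toFinset.2 ⟨x, by simpa using h, hx⟩)
    have hsne : sfin.Nonempty := by
      have h1 := f.sum_eq_one (mem_univ x₀)
      by_contra hemp
      rw [Finset.not_nonempty_iff_eq_empty] at hemp
      have : ∀ i, f i x₀ = 0 := by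
        intro i
        refine hzero x₀ (mem_of_mem_nhds hNx) i ?_
        simp [hemp]
      rw [finsum_eq_zero_of_forall_eq_zero this] at h1
      exact zero_ne_one h1
    set g : X × E → ℝ := fun p => sfin.inf' hsne (fun i => term i p) with hg_def
    have hgcont : Continuous g :=
      Continuous.finset_inf'_apply hsne (fun i _ => hterm_cont i)
    have heq : ∀ p : X × E, p.1 ∈ Nx → ψ p = g p := by
      rintro ⟨x, y⟩ hx
      refine le_antisymm (Finset.le_inf' hsne _ fun i _ => hψ_le _ i) ?_
      refine le_ciInf fun i => ?_
      by_cases hi : i ∈ sfin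
      · exact Finset.inf'_le _ hi
      · have : term i (x, y) = 1 := by
          rw [hterm_def]
          simp only [hzero x hx i hi, sub_zero]
          exact max_eq_right (hcapIcc i y).2
        rw [this]
        obtain ⟨i₀, hi₀⟩ := hsne
        exact (Finset.inf'_le _ hi₀).trans (hterm_le_one i₀ (x, y))
    have hmem : (Nx ×ˢ (univ : Set E)) ∈ nhds ((x₀, y₀) : X × E) :=
      prod_mem_nhds hNx Filter.univ_mem
    refine hgcont.continuousAt.congr ?_
    filter_upwards [hmem] with p hp
    exact (heq p hp.1).symm
  · -- = 1 on graph
    intro x y hy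
    have hall : ∀ i : X, term i (x, y) = 1 := by
      intro i
      by_cases h : f i x = 0
      · rw [hterm_def]
        simp only [h, sub_zero]
        exact max_eq_right (hcapIcc i y).2
      · have hxsupp : x ∈ O i :=
          hf i (subset_closure (by simpa [Function.mem_support] using h))
        rw [hterm_def]
        simp only [hcapone i x hxsupp y hy]
        exact max_eq_left (by linarith [f.nonneg i x])
    refine le_antisymm (hψIcc (x, y)).2 ?_
    exact le_ciInf fun i => (hall i).ge
  · -- < 1 off U
    intro x y hyY hnU
    have h1 := f.sum_eq_one (mem_univ x)
    have hex : ∃ i, f i x ≠ 0 := by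
      by_contra hcon
      push_neg at hcon
      rw [finsum_eq_zero_of_forall_eq_zero hcon] at h1
      exact zero_ne_one h1
    obtain ⟨i, hi⟩ := hex
    have hxsupp : x ∈ O i :=
      hf i (subset_closure (by simpa [Function.mem_support] using hi))
    have hfpos : 0 < f i x := lt_of_le_of_ne (f.nonneg i x) (Ne.symm hi)
    have : term i (x, y) < 1 :=
      max_lt (hcaplt i x hxsupp y hyY hnU) (by linarith)
    exact lt_of_le_of_lt (hψ_le (x, y) i) this
  · -- quasiconcavity
    intro x c
    have : {y | c ≤ ψ (x, y)} = ⋂ i : X, {y | c ≤ term i (x, y)} := by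
      ext y
      simp only [mem_setOf_eq, mem_iInter, hψ_def]
      exact le_ciInf_iff (hbdd (x, y))
    rw [this]
    refine convex_iInter fun i => ?_
    by_cases hc : c ≤ 1 - f i x
    · have : {y | c ≤ term i (x, y)} = univ := by
        ext y
        simp only [mem_setOf_eq, mem_univ, iff_true, hterm_def]
        exact hc.trans (le_max_right _ _)
      rw [this]; exact convex_univ
    · have : {y | c ≤ term i (x, y)} = {y | c ≤ cap i y} := by
        ext y
        simp only [mem_setOf_eq, hterm_def, le_max_iff]
        exact or_iff_left hc
      rw [this]; exact hcapconv i c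

theorem inverse_maximum_paracompact_iff_Gdelta'
    (Y : Set E) (hYne : Y.Nonempty) (hYconv : Convex ℝ Y) (hYcomp : IsCompact Y)
    (M : X → Set E) (hMY : ∀ x, M x ⊆ Y) (hMne : ∀ x, (M x).Nonempty)
    (hMconv : ∀ x, Convex ℝ (M x)) (hMcomp : ∀ x, IsCompact (M x))
    (hMusc : ∀ F : Set E, IsClosed F → IsClosed {x | (M x ∩ F).Nonempty}) :
    (∃ θ : X × E → ℝ, ContinuousOn θ ((univ : Set X) ×ˢ Y) ∧
      (∀ p ∈ (univ : Set X) ×ˢ Y, θ p ∈ Icc (0 : ℝ) 1) ∧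
      {p : X × E | p.2 ∈ M p.1} =
        {p ∈ (univ : Set X) ×ˢ Y | θ p = sSup ((fun z => θ (p.1, z)) '' Y)} ∧
      ∀ x : X, ∀ c : ℝ, Convex ℝ {y ∈ Y | c ≤ θ (x, y)}) ↔
    (∃ U : ℕ → Set (X × E), (∀ n, IsOpen (U n)) ∧
      {p : X × E | p.2 ∈ M p.1} = ((univ : Set X) ×ˢ Y) ∩ ⋂ n, U n) := by
  classical
  constructor
  · -- (i) → (ii)
    rintro ⟨θ, hcont, hIcc, hgraph, -⟩
    haveI : CompactSpace ↥Y := isCompact_iff_compactSpace.mp hYcomp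
    set i : X × ↥Y → X × E := fun q => (q.1, (q.2 : E)) with hi_def
    have hicont : Continuous i := continuous_fst.prodMk
      (continuous_subtype_val.comp continuous_snd)
    have hiS : ∀ q, i q ∈ (univ : Set X) ×ˢ Y := fun q => ⟨trivial, q.2.2⟩
    have hiind : Topology.IsInducing i :=
      Topology.IsInducing.id.prodMap Topology.IsInducing.subtypeVal
    set θZ : X × ↥Y → ℝ := θ ∘ i with hθZ_def
    have hθZcont : Continuous θZ := hcont.comp_continuous hicont hiS
    have hsliceCont : ∀ x : X, ContinuousOn (fun z => θ (x, z)) Y := by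
      intro x
      exact hcont.comp ((continuous_const.prodMk continuous_id).continuousOn)
        (fun z hz => ⟨trivial, hz⟩)
    have hbddim : ∀ x : X, BddAbove ((fun z => θ (x, z)) '' Y) := fun x =>
      hYcomp.bddAbove_image (hsliceCont x)
    set D : ℕ → Set (X × ↥Y) := fun n =>
      {q | ∀ z : ↥Y, θZ (q.1, z) < θZ q + 1 / (n + 1 : ℝ)} with hD_def
    have hDopen : ∀ n, IsOpen (D n) := by
      intro n
      have : (D n)ᶜ = Prod.fst ''
          {qz : (X × ↥Y) × ↥Y | θZ qz.1 + 1 / (n + 1 : ℝ) ≤ θZ (qz.1.1, qz.2)} := by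
        ext q
        simp only [mem_compl_iff, hD_def, mem_setOf_eq, not_forall, not_lt]
        constructor
        · rintro ⟨z, hz⟩; exact ⟨(q, z), hz, rfl⟩
        · rintro ⟨⟨q', z⟩, hz, hq'⟩
          exact ⟨z, by rw [← hq']; exact hz⟩
      rw [← isClosed_compl_iff, this]
      refine isClosedMap_fst_of_compactSpace _ ?_
      exact isClosed_le ((hθZcont.comp continuous_fst).add continuous_const)
        (hθZcont.comp ((continuous_fst.comp continuous_fst).prodMk continuous_snd))
    have hDU : ∀ n, ∃ V : Set (X × E), IsOpen V ∧ i ⁻¹' V = D n := by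
      intro n
      exact (hiind.isOpen_iff).1 (hDopen n)
    choose U hUopen hUD using hDU
    refine ⟨U, hUopen, ?_⟩
    ext p
    constructor
    · intro hp
      have hpS : p ∈ (univ : Set X) ×ˢ Y := ⟨trivial, hMY p.1 hp⟩
      have hpgr := hgraph ▸ hp
      have hθeq : θ p = sSup ((fun z => θ (p.1, z)) '' Y) := by
        have : p ∈ {p ∈ (univ : Set X) ×ˢ Y | θ p = sSup ((fun z => θ (p.1, z)) '' Y)} := by
          rw [← hgraph]; exact hp
        exact this.2
      refine ⟨hpS, mem_iInter.2 fun n => ?_⟩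
      set q : X × ↥Y := (p.1, ⟨p.2, hpS.2⟩) with hq_def
      have hiq : i q = p := rfl
      rw [← hiq, ← mem_preimage, hUD n]
      intro z
      have hle : θ (p.1, (z : E)) ≤ sSup ((fun z => θ (p.1, z)) '' Y) :=
        le_csSup (hbddim p.1) ⟨(z : E), z.2, rfl⟩
      have : θZ (q.1, z) ≤ θ p := by
        rw [hθeq]; exact hle
      have hpos : (0:ℝ) < 1 / (n + 1 : ℝ) := by positivity
      calc θZ (q.1, z) ≤ θ p := this
        _ < θ p + 1 / (n + 1 : ℝ) := by linarith
        _ = θZ q + 1 / (n + 1 : ℝ) := rfl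
    · rintro ⟨hpS, hpU⟩
      set q : X × ↥Y := (p.1, ⟨p.2, hpS.2⟩) with hq_def
      have hiq : i q = p := rfl
      have hqD : ∀ n, q ∈ D n := by
        intro n
        rw [← hUD n, mem_preimage, hiq]
        exact mem_iInter.1 hpU n
      have hub : ∀ z : ↥Y, θ (p.1, (z : E)) ≤ θ p := by
        intro z
        by_contra hcon
        push_neg at hcon
        obtain ⟨n, hn⟩ := exists_nat_one_div_lt (sub_pos.2 hcon)
        have := hqD n z
        change θZ (q.1, z) < θZ q + 1 / (n + 1 : ℝ) at this
        have hθZq : θZ q = θ p := rfl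
        rw [hθZq] at this
        have : θ (p.1, (z : E)) < θ p + 1 / (n + 1 : ℝ) := this
        have hn' : ((n : ℝ) + 1) = ((n : ℕ) + 1 : ℝ) := by push_cast; ring
        linarith [hn]
      have hθeq : θ p = sSup ((fun z => θ (p.1, z)) '' Y) := by
        refine le_antisymm (le_csSup (hbddim p.1) ⟨p.2, hpS.2, rfl⟩) ?_
        refine csSup_le (hYne.image _) ?_
        rintro v ⟨z, hz, rfl⟩
        exact hub ⟨z, hz⟩
      have : p ∈ {p ∈ (univ : Set X) ×ˢ Y | θ p = sSup ((fun z => θ (p.1, z)) '' Y)} :=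
        ⟨hpS, hθeq⟩
      rw [← hgraph] at this
      exact this
  · -- (ii) → (i)
    rintro ⟨U, hUopen, hgraph⟩
    have hGU : ∀ n, ∀ x, ∀ y ∈ M x, (x, y) ∈ U n := by
      intro n x y hy
      have : (x, y) ∈ ((univ : Set X) ×ˢ Y) ∩ ⋂ n, U n := by
        rw [← hgraph]; exact hy
      exact mem_iInter.1 this.2 n
    choose ψ hψcont hψIcc hψone hψlt hψconv using fun n =>
      imt_core Y hYcomp M hMconv hMcomp hMusc (U n) (hUopen n) (hGU n)
    set a : ℕ → ℝ := fun n => 1 - (2⁻¹ : ℝ) ^ n with ha_def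
    have ha_lt_one : ∀ n, a n < 1 := by
      intro n
      have : (0:ℝ) < (2⁻¹:ℝ) ^ n := by positivity
      simp only [ha_def]; linarith
    have ha_le_one : ∀ n, a n ≤ 1 := fun n => (ha_lt_one n).le
    have ha_mono : ∀ {n k : ℕ}, n ≤ k → a n ≤ a k := by
      intro n k hnk
      have : (2⁻¹:ℝ) ^ k ≤ (2⁻¹:ℝ) ^ n :=
        pow_le_pow_of_le_one (by norm_num) (by norm_num) hnk
      simp only [ha_def]; linarith
    set tn : ℕ → X × E → ℝ := fun n p => max (ψ n p) (a n) with htn_def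
    have htn_nonneg : ∀ n p, 0 ≤ tn n p := fun n p =>
      le_trans (hψIcc n p).1 (le_max_left _ _)
    have htn_le_one : ∀ n p, tn n p ≤ 1 := fun n p =>
      max_le (hψIcc n p).2 (ha_le_one n)
    have hbdd : ∀ p : X × E, BddBelow (range fun n => tn n p) := by
      intro p
      exact ⟨0, by rintro v ⟨n, rfl⟩; exact htn_nonneg n p⟩
    set θ : X × E → ℝ := fun p => ⨅ n : ℕ, tn n p with hθ_def
    have hθ_le : ∀ p n, θ p ≤ tn n p := fun p n => ciInf_le (hbdd p) n
    have hθIcc : ∀ p, θ p ∈ Icc (0:ℝ) 1 := by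
      intro p
      exact ⟨le_ciInf fun n => htn_nonneg n p, (hθ_le p 0).trans (htn_le_one 0 p)⟩
    have htncont : ∀ n, Continuous (tn n) := fun n => (hψcont n).max continuous_const
    -- partial minima
    set Pm : ℕ → X × E → ℝ := fun n p =>
      (Finset.range (n + 1)).inf' (by simp) (fun k => tn k p) with hPm_def
    have hPmcont : ∀ n, Continuous (Pm n) := fun n =>
      Continuous.finset_inf'_apply _ (fun k _ => htncont k)
    have hθ_le_Pm : ∀ n p, θ p ≤ Pm n p := fun n p =>
      Finset.le_inf' _ _ fun k _ => hθ_le p k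
    have hPm_le_one : ∀ n p, Pm n p ≤ 1 := fun n p =>
      (Finset.inf'_le _ (by simp : 0 ∈ Finset.range (n+1))).trans (htn_le_one 0 p)
    have hPm_le : ∀ n p, Pm n p ≤ θ p + (2⁻¹:ℝ) ^ n := by
      intro n p
      have : Pm n p - (2⁻¹:ℝ) ^ n ≤ θ p := by
        refine le_ciInf fun k => ?_
        rcases le_or_gt k n with hk | hk
        · have : Pm n p ≤ tn k p :=
            Finset.inf'_le _ (by simp [Nat.lt_succ_iff, hk] : k ∈ Finset.range (n+1))
          have hpow : (0:ℝ) < (2⁻¹:ℝ) ^ n := by positivity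
          linarith
        · have h1 : a n ≤ a k := ha_mono hk.le
          have h2 : a k ≤ tn k p := le_max_right _ _
          have h3 : Pm n p ≤ 1 := hPm_le_one n p
          simp only [ha_def] at h1
          have : 1 - (2⁻¹:ℝ) ^ n ≤ tn k p := by
            refine le_trans ?_ h2
            simp only [ha_def]
            linarith
          linarith
      linarith
    have hθcont : Continuous θ := by
      have huni : TendstoUniformly (fun n p => Pm n p) θ Filter.atTop := by
        rw [Metric.tendstoUniformly_iff]
        intro ε hε
        obtain ⟨N, hN⟩ := exists_pow_lt_of_lt_one hε (by norm_num : (2⁻¹:ℝ) < 1)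
        filter_upwards [Filter.eventually_ge_atTop N] with n hn p
        have h1 := hθ_le_Pm n p
        have h2 := hPm_le n p
        have h3 : (2⁻¹:ℝ) ^ n ≤ (2⁻¹:ℝ) ^ N :=
          pow_le_pow_of_le_one (by norm_num) (by norm_num) hn
        rw [Real.dist_eq, abs_sub_comm, abs_of_nonneg (by linarith)]
        linarith
      exact huni.continuous (Filter.Eventually.of_forall hPmcont).frequently
    have hθone : ∀ x, ∀ y ∈ M x, θ (x, y) = 1 := by
      intro x y hy
      refine le_antisymm (hθIcc (x, y)).2 (le_ciInf fun n => ?_)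
      rw [htn_def]
      simp only [hψone n x y hy]
      exact (max_eq_left (ha_le_one n)).ge
    have hθlt : ∀ p ∈ (univ : Set X) ×ˢ Y, p.2 ∉ M p.1 → θ p < 1 := by
      rintro ⟨x, y⟩ hpS hnot
      have : (x, y) ∉ ((univ : Set X) ×ˢ Y) ∩ ⋂ n, U n := by
        rw [← hgraph]; exact hnot
      have : ¬ (x, y) ∈ ⋂ n, U n := fun h => this ⟨hpS, h⟩
      rw [mem_iInter] at this
      push_neg at this
      obtain ⟨n, hn⟩ := this
      have h1 : ψ n (x, y) < 1 := hψlt n x y hpS.2 hn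
      have h2 : tn n (x, y) < 1 := max_lt h1 (ha_lt_one n)
      exact lt_of_le_of_lt (hθ_le (x, y) n) h2
    have hsup : ∀ x : X, sSup ((fun z => θ (x, z)) '' Y) = 1 := by
      intro x
      obtain ⟨z₀, hz₀⟩ := hMne x
      refine IsGreatest.csSup_eq ⟨⟨z₀, hMY x hz₀, hθone x z₀ hz₀⟩, ?_⟩
      rintro v ⟨z, hz, rfl⟩
      exact (hθIcc (x, z)).2
    refine ⟨θ, hθcont.continuousOn, fun p _ => hθIcc p, ?_, ?_⟩
    · ext p
      constructor
      · intro hp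
        exact ⟨⟨trivial, hMY p.1 hp⟩, by rw [hsup p.1]; exact hθone p.1 p.2 hp⟩
      · rintro ⟨hpS, hθeq⟩
        by_contra hnot
        rw [hsup p.1] at hθeq
        exact absurd hθeq (ne_of_lt (hθlt p hpS hnot))
    · intro x c
      have : {y ∈ Y | c ≤ θ (x, y)} = Y ∩ ⋂ n, {y | c ≤ tn n (x, y)} := by
        ext y
        simp only [mem_setOf_eq, mem_inter_iff, mem_iInter]
        constructor
        · rintro ⟨hy, hc⟩; exact ⟨hy, fun n => hc.trans (hθ_le (x, y) n)⟩
        · rintro ⟨hy, hc⟩; exact ⟨hy, le_ciInf hc⟩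
      rw [this]
      refine hYconv.inter (convex_iInter fun n => ?_)
      by_cases hc : c ≤ a n
      · have : {y | c ≤ tn n (x, y)} = univ := by
          ext y
          simp only [mem_setOf_eq, mem_univ, iff_true, htn_def]
          exact hc.trans (le_max_right _ _)
        rw [this]; exact convex_univ
      · have : {y | c ≤ tn n (x, y)} = {y | c ≤ ψ n (x, y)} := by
          ext y
          simp only [mem_setOf_eq, htn_def, le_max_iff]
          exact or_iff_left hc
        rw [this]; exact hψconv n x c

end Main


/-- For a nonempty paracompact space `X`, a nonempty convex compact subset `Y` of a
Hausdorff locally convex space, and an upper semicontinuous correspondence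
`M : X ⇉ Y` with nonempty convex compact values, the existence of a continuous
`θ : X × Y → [0,1]`, quasi-concave in the second variable, realizing `M` as argmax
correspondence over `Y`, is equivalent to `gra M` being a `Gδ` subset of `X × Y`. -/
theorem inverse_maximum_paracompact_iff_Gdelta
    {X E : Type*} [TopologicalSpace X] [T2Space X] [ParacompactSpace X] [Nonempty X]
    [AddCommGroup E] [Module ℝ E] [TopologicalSpace E] [IsTopologicalAddGroup E]
    [ContinuousSMul ℝ E] [LocallyConvexSpace ℝ E] [T2Space E]
    (Y : Set E) (hYne : Y.Nonempty) (hYconv : Convex ℝ Y) (hYcomp : IsCompact Y)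
    (M : X → Set E) (hMY : ∀ x, M x ⊆ Y) (hMne : ∀ x, (M x).Nonempty)
    (hMconv : ∀ x, Convex ℝ (M x)) (hMcomp : ∀ x, IsCompact (M x))
    (hMusc : ∀ F : Set E, IsClosed F → IsClosed {x | (M x ∩ F).Nonempty}) :
    (∃ θ : X × E → ℝ, ContinuousOn θ ((univ : Set X) ×ˢ Y) ∧
      (∀ p ∈ (univ : Set X) ×ˢ Y, θ p ∈ Icc (0 : ℝ) 1) ∧
      {p : X × E | p.2 ∈ M p.1} =
        {p ∈ (univ : Set X) ×ˢ Y | θ p = sSup ((fun z => θ (p.1, z)) '' Y)} ∧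
      ∀ x : X, ∀ c : ℝ, Convex ℝ {y ∈ Y | c ≤ θ (x, y)}) ↔
    (∃ U : ℕ → Set (X × E), (∀ n, IsOpen (U n)) ∧
      {p : X × E | p.2 ∈ M p.1} = ((univ : Set X) ×ˢ Y) ∩ ⋂ n, U n) :=
  inverse_maximum_paracompact_iff_Gdelta' Y hYne hYconv hYcomp M hMY hMne hMconv
    hMcomp hMusc
end

section
/- Consider a game with p players, where for each i ∈ {1,…,p} the strategy set C_i is a nonempty compact Hausdorff topological space, C = ∏_{i=1}^p C_i. Suppose for each i: (i) the payoff function θ_i : C → ℝ is continuous; (ii) the constraint correspondence K_i : C_{-i} ⇉ C_i is continuous with nonempty closed values; and (iii) the set gra(K_i) = {x ∈ C : x_i ∈ K_i(x_{-i})} is a Gδ subset of C. Then there exist continuous functions ϑ_i : C → [0,1], i ∈ {1,…,p}, such that the set of generalized Nash equilibria of (θ_i, K_i) equals the set of Nash equilibria of (ϑ_i, C_i): that is, x̂ ∈ C satisfies [x̂_i ∈ K_i(x̂_{-i}) and θ_i(x̂) ≥ θ_i(x_i, x̂_{-i}) for all x_i ∈ K_i(x̂_{-i}) and all i] if and only if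 [ϑ_i(x̂) ≥ ϑ_i(x_i, x̂_{-i}) for all x_i ∈ C_i and all i]. -/
open Set

/-- Given a strategy `xi` for player `i` and strategies `xm` for the other players,
`combineStrategy i xi xm` is the resulting full strategy profile `(xi, x₋ᵢ)`. -/
def combineStrategy {p : ℕ} {C : Fin p → Type*} (i : Fin p) (xi : C i)
    (xm : ∀ j : {j : Fin p // j ≠ i}, C j.1) : ∀ j, C j :=
  fun j => if h : j = i then h.symm ▸ xi else xm ⟨j, h⟩

/-- The strategies `x₋ᵢ` of the players other than `i` extracted from a full profile. -/
def minusStrategy {p : ℕ} {C : Fin p → Type*} (i : Fin p) (x : ∀ j, C j) :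
    ∀ j : {j : Fin p // j ≠ i}, C j.1 :=
  fun j => x j.1

set_option maxHeartbeats 1000000

section aux
variable {p : ℕ} {C : Fin p → Type*}

lemma combine_self (i : Fin p) (xi : C i) (xm : ∀ j : {j : Fin p // j ≠ i}, C j.1) :
    combineStrategy i xi xm i = xi := by simp [combineStrategy]

lemma minus_combine (i : Fin p) (xi : C i) (xm : ∀ j : {j : Fin p // j ≠ i}, C j.1) :
    minusStrategy i (combineStrategy i xi xm) = xm := by
  funext j
  simp [minusStrategy, combineStrategy, j.2]

lemma combine_minus (i : Fin p) (x : ∀ j, C j) :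
    combineStrategy i (x i) (minusStrategy i x) = x := by
  funext j
  by_cases h : j = i
  · subst h; simp [combineStrategy]
  · simp [combineStrategy, h, minusStrategy]

variable [∀ i, TopologicalSpace (C i)]

lemma continuous_minus (i : Fin p) : Continuous (minusStrategy i : (∀ j, C j) → _) :=
  continuous_pi fun j => continuous_apply j.1

lemma continuous_combine (i : Fin p) :
    Continuous (fun q : C i × (∀ j : {j : Fin p // j ≠ i}, C j.1) =>
      combineStrategy i q.1 q.2) := by
  refine continuous_pi fun j => ?_
  by_cases h : j = i
  · subst h
    simpa [combineStrategy] using (continuous_fst : Continuous fun q : C j × _ => q.1)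
  · simp only [combineStrategy, h, ↓reduceDIte]
    exact (continuous_apply (⟨j, h⟩ : {j : Fin p // j ≠ i})).comp continuous_snd
end aux
open Set

lemma continuous_of_Ioi_Iio {X : Type*} [TopologicalSpace X] {v : X → ℝ}
    (h1 : ∀ a, IsOpen (v ⁻¹' Ioi a)) (h2 : ∀ a, IsOpen (v ⁻¹' Iio a)) : Continuous v := by
  refine continuous_iff_continuousAt.2 fun x => tendsto_order.2 ⟨fun a ha => ?_, fun a ha => ?_⟩
  · exact Filter.eventually_of_mem ((h1 a).mem_nhds ha) fun y hy => hy
  · exact Filter.eventually_of_mem ((h2 a).mem_nhds ha) fun y hy => hy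

lemma sq_strictMono : StrictMono (fun t : ℝ => t / (1 + |t|)) := by
  intro a b hab
  have ha : (0:ℝ) < 1 + |a| := by positivity
  have hb : (0:ℝ) < 1 + |b| := by positivity
  rw [div_lt_div_iff₀ ha hb]
  rcases le_or_gt 0 a with h1 | h1 <;> rcases le_or_gt 0 b with h2 | h2
  · rw [abs_of_nonneg h1, abs_of_nonneg h2]; nlinarith
  · nlinarith [abs_nonneg a, abs_nonneg b]
  · rw [abs_of_neg h1, abs_of_nonneg h2]; nlinarith
  · rw [abs_of_neg h1, abs_of_neg h2]; nlinarith

lemma sq_mem : ∀ t : ℝ, t / (1 + |t|) ∈ Ioo (-1 : ℝ) 1 := by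
  intro t
  have ha : (0:ℝ) < 1 + |t| := by positivity
  constructor
  · rw [lt_div_iff₀ ha]; cases abs_cases t with
    | inl h => nlinarith [h.1, h.2]
    | inr h => nlinarith [h.1, h.2]
  · rw [div_lt_one ha]; cases abs_cases t with
    | inl h => nlinarith [h.1, h.2]
    | inr h => nlinarith [h.1, h.2]

lemma sq_continuous : Continuous (fun t : ℝ => t / (1 + |t|)) := by
  apply continuous_id.div (by continuity)
  intro t; positivity
open Set

lemma exists_zero_fun {X : Type*} [TopologicalSpace X] [NormalSpace X] {D : Set X}
    (hD : IsClosed D) (U : ℕ → Set X) (hU : ∀ n, IsOpen (U n)) (hDU : D = ⋂ n, U n) :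
    ∃ g : X → ℝ, Continuous g ∧ (∀ x, g x ∈ Icc (0:ℝ) 1) ∧ ∀ x, g x = 0 ↔ x ∈ D := by
  have hsub : ∀ n, D ⊆ U n := fun n => hDU ▸ iInter_subset U n
  have hdisj : ∀ n, Disjoint D (U n)ᶜ := fun n =>
    disjoint_compl_right_iff_subset.2 (hsub n)
  have H : ∀ n : ℕ, ∃ f : C(X, ℝ), EqOn f 0 D ∧ EqOn f 1 (U n)ᶜ ∧ ∀ x, f x ∈ Icc (0:ℝ) 1 :=
    fun n => exists_continuous_zero_one_of_isClosed hD (hU n).isClosed_compl (hdisj n)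
  choose f hf0 hf1 hf01 using H
  have hterm_nonneg : ∀ n x, 0 ≤ (1/2:ℝ)^(n+1) * f n x := fun n x => by
    have := (hf01 n x).1; positivity
  have hterm_le : ∀ n x, (1/2:ℝ)^(n+1) * f n x ≤ (1/2:ℝ)^(n+1) := fun n x => by
    have h1 := (hf01 n x).2
    have : (0:ℝ) < (1/2:ℝ)^(n+1) := by positivity
    nlinarith
  have hsumu : Summable (fun n : ℕ => (1/2:ℝ)^(n+1)) := by
    simpa [pow_succ, mul_comm] using summable_geometric_two.mul_left (1/2 : ℝ)
  have hsum : ∀ x, Summable (fun n : ℕ => (1/2:ℝ)^(n+1) * f n x) := fun x =>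
    Summable.of_nonneg_of_le (fun n => hterm_nonneg n x) (fun n => hterm_le n x) hsumu
  refine ⟨fun x => ∑' n, (1/2:ℝ)^(n+1) * f n x, ?_, ?_, ?_⟩
  · refine continuous_tsum (fun n => (continuous_const.mul (f n).continuous)) hsumu fun n x => ?_
    rw [Real.norm_eq_abs, abs_of_nonneg (hterm_nonneg n x)]
    exact hterm_le n x
  · intro x
    constructor
    · exact tsum_nonneg fun n => hterm_nonneg n x
    · calc ∑' n, (1/2:ℝ)^(n+1) * f n x ≤ ∑' n : ℕ, (1/2:ℝ)^(n+1) :=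
            Summable.tsum_le_tsum (fun n => hterm_le n x) (hsum x) hsumu
        _ = 1 := by
            have : ∑' n : ℕ, (1/2:ℝ)^(n+1) = (1/2) * ∑' n : ℕ, (1/2:ℝ)^n := by
              rw [← tsum_mul_left]; congr 1; funext n; ring
            rw [this, tsum_geometric_two]; norm_num
  · intro x
    constructor
    · intro h
      replace h : ∑' n, (1/2:ℝ)^(n+1) * f n x = 0 := h
      by_contra hx
      have hx' : x ∉ ⋂ n, U n := hDU ▸ hx
      obtain ⟨n, hn⟩ : ∃ n, x ∉ U n := by simpa using hx'
      have h1 : f n x = 1 := hf1 n hn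
      have : (1/2:ℝ)^(n+1) * f n x ≤ ∑' m, (1/2:ℝ)^(m+1) * f m x :=
        Summable.le_tsum (hsum x) n fun m _ => hterm_nonneg m x
      rw [h, h1] at this
      have : (0:ℝ) < (1/2:ℝ)^(n+1) := by positivity
      linarith
    · intro hx
      show ∑' n, (1/2:ℝ)^(n+1) * f n x = 0
      have hz : (fun n : ℕ => (1/2:ℝ)^(n+1) * f n x) = fun _ => 0 := funext fun n => by
        rw [show f n x = 0 from hf0 n hx]; ring
      rw [hz, tsum_zero]

lemma berge {Y Z : Type*} [TopologicalSpace Y] [TopologicalSpace Z] [CompactSpace Y]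
    (K : Z → Set Y) (f : Y → Z → ℝ) (hf : Continuous fun q : Y × Z => f q.1 q.2)
    (hne : ∀ z, (K z).Nonempty) (hcl : ∀ z, IsClosed (K z))
    (hlsc : ∀ G : Set Y, IsOpen G → IsOpen {z | (K z ∩ G).Nonempty})
    (husc : ∀ F : Set Y, IsClosed F → IsClosed {z | (K z ∩ F).Nonempty}) :
    (∀ z, IsGreatest ((fun y => f y z) '' K z) (sSup ((fun y => f y z) '' K z))) ∧
    Continuous (fun z => sSup ((fun y => f y z) '' K z)) := by
  have hgr : ∀ z, IsGreatest ((fun y => f y z) '' K z) (sSup ((fun y => f y z) '' K z)) := by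
    intro z
    obtain ⟨y, hy, hmax⟩ := (hcl z).isCompact.exists_isMaxOn (hne z)
      (Continuous.continuousOn (hf.comp (continuous_id.prodMk continuous_const)))
    have hG : IsGreatest ((fun y => f y z) '' K z) (f y z) :=
      ⟨mem_image_of_mem _ hy, by rintro _ ⟨y', hy', rfl⟩; exact hmax hy'⟩
    rwa [hG.csSup_eq]
  refine ⟨hgr, continuous_of_Ioi_Iio ?_ ?_⟩
  · intro a
    rw [isOpen_iff_forall_mem_open]
    intro z₀ hz₀
    obtain ⟨y₀, hy₀, hfy₀⟩ := (hgr z₀).1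
    have hO : IsOpen {q : Y × Z | a < f q.1 q.2} := isOpen_lt continuous_const hf
    obtain ⟨G, W, hG, hW, hyG, hzW, hGW⟩ :=
      isOpen_prod_iff.1 hO y₀ z₀ (by simpa [hfy₀] using hz₀)
    refine ⟨W ∩ {z | (K z ∩ G).Nonempty}, ?_, (hW.inter (hlsc G hG)), hzW, ⟨y₀, hy₀, hyG⟩⟩
    rintro z ⟨hzW', y, hyK, hyG'⟩
    have : a < f y z := hGW (mk_mem_prod hyG' hzW')
    exact lt_of_lt_of_le this ((hgr z).2 (mem_image_of_mem _ hyK))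
  · intro a
    rw [isOpen_iff_forall_mem_open]
    intro z₀ hz₀
    have hO : IsOpen {q : Y × Z | f q.1 q.2 < a} := isOpen_lt hf continuous_const
    have H : ∀ y : K z₀, ∃ G W, IsOpen G ∧ IsOpen W ∧ (y : Y) ∈ G ∧ z₀ ∈ W ∧
        G ×ˢ W ⊆ {q : Y × Z | f q.1 q.2 < a} := by
      intro y
      refine isOpen_prod_iff.1 hO y z₀ ?_
      exact lt_of_le_of_lt ((hgr z₀).2 (mem_image_of_mem _ y.2)) hz₀
    choose G W hG hW hyG hzW hGW using H
    obtain ⟨t, ht⟩ := (hcl z₀).isCompact.elim_finite_subcover G hG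
      (fun y hy => mem_iUnion.2 ⟨⟨y, hy⟩, hyG ⟨y, hy⟩⟩)
    set GG : Set Y := ⋃ y ∈ t, G y with hGG
    have hGGrw : K z₀ ⊆ GG := by
      intro y hy
      obtain ⟨s, hs⟩ := mem_iUnion.1 (ht hy)
      obtain ⟨hst, hyGs⟩ := mem_iUnion.1 hs
      exact mem_iUnion.2 ⟨s, mem_iUnion.2 ⟨hst, hyGs⟩⟩
    have hGGo : IsOpen GG := isOpen_biUnion fun y _ => hG y
    have hScl : IsClosed {z | (K z ∩ GGᶜ).Nonempty} := husc _ hGGo.isClosed_compl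
    have hz₀S : z₀ ∉ {z | (K z ∩ GGᶜ).Nonempty} := by
      rintro ⟨y, hyK, hyGG⟩; exact hyGG (hGGrw hyK)
    set W' : Set Z := ⋂ y ∈ t, W y with hW'
    have hW'o : IsOpen W' := isOpen_biInter_finset fun y _ => hW y
    have hzW' : z₀ ∈ W' := mem_iInter₂.2 fun y _ => hzW y
    refine ⟨W' ∩ {z | (K z ∩ GGᶜ).Nonempty}ᶜ, ?_, hW'o.inter hScl.isOpen_compl,
      hzW', hz₀S⟩
    rintro z ⟨hzW'', hzS⟩
    obtain ⟨yb, hyb, hfyb⟩ := (hgr z).1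
    have hybGG : yb ∈ GG := by
      by_contra h
      exact hzS ⟨yb, hyb, h⟩
    obtain ⟨s, hs⟩ := mem_iUnion.1 hybGG
    obtain ⟨hst, hybGs⟩ := mem_iUnion.1 hs
    have : f yb z < a := hGW s (mk_mem_prod hybGs (mem_iInter₂.1 hzW'' s hst))
    simpa [hfyb] using this
open Set

lemma graph_closed {Y Z : Type*} [TopologicalSpace Y] [TopologicalSpace Z]
    [CompactSpace Y] [T2Space Y] (K : Z → Set Y) (hcl : ∀ z, IsClosed (K z))
    (husc : ∀ F : Set Y, IsClosed F → IsClosed {z | (K z ∩ F).Nonempty}) :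
    IsClosed {q : Y × Z | q.1 ∈ K q.2} := by
  rw [← isOpen_compl_iff, isOpen_iff_forall_mem_open]
  rintro ⟨y₀, z₀⟩ (hy₀ : y₀ ∉ K z₀)
  obtain ⟨t, htmem, htcl, hts⟩ :=
    exists_mem_nhds_isClosed_subset ((hcl z₀).isOpen_compl.mem_nhds hy₀)
  refine ⟨interior t ×ˢ {z | (K z ∩ t).Nonempty}ᶜ, ?_,
    isOpen_interior.prod (husc t htcl).isOpen_compl,
    mk_mem_prod (mem_interior_iff_mem_nhds.2 htmem) fun hS => ?_⟩
  · rintro ⟨y, z⟩ ⟨hyt, hzS⟩ (hyK : y ∈ K z)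
    exact hzS ⟨y, hyK, interior_subset hyt⟩
  · obtain ⟨y, hyK, hyt⟩ := hS
    exact hts hyt hyK

/-- Reduction of a generalized Nash game to a classical Nash game: for compact
strategy spaces, continuous payoffs `θ i`, continuous constraint correspondences
`K i` with nonempty closed values whose graphs are `Gδ` subsets of `C`, there are
continuous payoffs `ϑ i : C → [0,1]` such that the generalized Nash equilibria of
`(θ i, K i)` coincide with the Nash equilibria of `(ϑ i, C i)`. -/
theorem gnep_eq_nep
    {p : ℕ} (C : Fin p → Type*) [∀ i, TopologicalSpace (C i)] [∀ i, T2Space (C i)]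
    [∀ i, Nonempty (C i)] [∀ i, CompactSpace (C i)]
    (θ : ∀ _ : Fin p, (∀ j, C j) → ℝ) (hθ : ∀ i, Continuous (θ i))
    (K : ∀ i : Fin p, (∀ j : {j : Fin p // j ≠ i}, C j.1) → Set (C i))
    (hKne : ∀ i xm, (K i xm).Nonempty)
    (hKcl : ∀ i xm, IsClosed (K i xm))
    (hKlsc : ∀ i, ∀ G : Set (C i), IsOpen G →
      IsOpen {xm : ∀ j : {j : Fin p // j ≠ i}, C j.1 | (K i xm ∩ G).Nonempty})
    (hKusc : ∀ i, ∀ F : Set (C i), IsClosed F →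
      IsClosed {xm : ∀ j : {j : Fin p // j ≠ i}, C j.1 | (K i xm ∩ F).Nonempty})
    (hGδ : ∀ i, ∃ U : ℕ → Set (∀ j, C j), (∀ n, IsOpen (U n)) ∧
      {x : ∀ j, C j | x i ∈ K i (minusStrategy i x)} = ⋂ n, U n) :
    ∃ ϑ : ∀ _ : Fin p, (∀ j, C j) → ℝ,
      (∀ i, Continuous (ϑ i)) ∧ (∀ i x, ϑ i x ∈ Icc (0 : ℝ) 1) ∧
      ∀ xh : ∀ j, C j,
        ((∀ i, xh i ∈ K i (minusStrategy i xh) ∧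
            ∀ xi ∈ K i (minusStrategy i xh),
              θ i (combineStrategy i xi (minusStrategy i xh)) ≤ θ i xh) ↔
          (∀ i, ∀ xi : C i,
            ϑ i (combineStrategy i xi (minusStrategy i xh)) ≤ ϑ i xh)) := by
  classical
  -- normalized payoffs with values in (-1, 1)
  set fθ : ∀ _ : Fin p, (∀ j, C j) → ℝ := fun i x => θ i x / (1 + |θ i x|) with hfθ
  have hfθc : ∀ i, Continuous (fθ i) := fun i => sq_continuous.comp (hθ i)
  have hfθmem : ∀ i x, fθ i x ∈ Ioo (-1 : ℝ) 1 := fun i x => sq_mem _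
  have hmono : ∀ i (x y : ∀ j, C j), fθ i x ≤ fθ i y ↔ θ i x ≤ θ i y := fun i x y =>
    sq_strictMono.le_iff_le
  -- the penalty functions g i vanishing exactly on the feasible sets
  have hgracl : ∀ i, IsClosed {x : ∀ j, C j | x i ∈ K i (minusStrategy i x)} := fun i =>
    (graph_closed (K i) (hKcl i) (hKusc i)).preimage
      ((continuous_apply i).prodMk (continuous_minus i))
  have hg : ∀ i, ∃ g : (∀ j, C j) → ℝ, Continuous g ∧ (∀ x, g x ∈ Icc (0:ℝ) 1) ∧
      ∀ x, g x = 0 ↔ x ∈ {x : ∀ j, C j | x i ∈ K i (minusStrategy i x)} := by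
    intro i
    obtain ⟨U, hU, hDU⟩ := hGδ i
    exact exists_zero_fun (hgracl i) U hU hDU
  choose g hgc hg01 hg0 using hg
  -- the value functions
  have hberge : ∀ i,
      (∀ z, IsGreatest ((fun y => fθ i (combineStrategy i y z)) '' K i z)
        (sSup ((fun y => fθ i (combineStrategy i y z)) '' K i z))) ∧
      Continuous (fun z => sSup ((fun y => fθ i (combineStrategy i y z)) '' K i z)) := by
    intro i
    exact berge (K i) (fun y z => fθ i (combineStrategy i y z))
      ((hfθc i).comp (continuous_combine i)) (hKne i) (hKcl i) (hKlsc i) (hKusc i)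
  set v : ∀ i : Fin p, (∀ j : {j : Fin p // j ≠ i}, C j.1) → ℝ := fun i z =>
    sSup ((fun y => fθ i (combineStrategy i y z)) '' K i z) with hv
  have hub : ∀ i z y, y ∈ K i z → fθ i (combineStrategy i y z) ≤ v i z := fun i z y hy =>
    ((hberge i).1 z).2 (mem_image_of_mem _ hy)
  have hex : ∀ i z, ∃ y ∈ K i z, fθ i (combineStrategy i y z) = v i z := by
    intro i z
    obtain ⟨y, hy, heq⟩ := ((hberge i).1 z).1
    exact ⟨y, hy, heq⟩
  have hvc : ∀ i, Continuous (v i) := fun i => (hberge i).2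
  have hvmem : ∀ i z, v i z ∈ Ioo (-1 : ℝ) 1 := by
    intro i z
    obtain ⟨y, _, heq⟩ := hex i z
    exact heq ▸ hfθmem i _
  -- the new payoff functions
  refine ⟨fun i x => (min (fθ i x) (v i (minusStrategy i x)) - g i x + 2) / 3, ?_, ?_, ?_⟩
  · intro i
    exact ((((hfθc i).min ((hvc i).comp (continuous_minus i))).sub (hgc i)).add
      continuous_const).div_const 3
  · intro i x
    have h1 := hfθmem i x
    have h2 := hvmem i (minusStrategy i x)
    have h3 := hg01 i x
    have hmin : min (fθ i x) (v i (minusStrategy i x)) ∈ Ioo (-1 : ℝ) 1 :=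
      ⟨lt_min h1.1 h2.1, min_lt_of_left_lt h1.2⟩
    constructor
    · have := hmin.1; have := h3.2; simp only; linarith
    · have := hmin.2; have := h3.1; simp only; linarith
  · intro xh
    constructor
    · intro h i xi
      obtain ⟨feas, opt⟩ := h i
      have hgx : g i xh = 0 := (hg0 i xh).2 feas
      -- v = fθ at xh
      have hgev : v i (minusStrategy i xh) = fθ i xh := by
        refine le_antisymm ?_ ?_
        · obtain ⟨y, hy, heq⟩ := hex i (minusStrategy i xh)
          rw [← heq]
          exact (hmono i _ _).2 (opt y hy)
        · have := hub i (minusStrategy i xh) (xh i) feas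
          rwa [combine_minus] at this
      have hmm := minus_combine i xi (minusStrategy i xh)
      have h2 := hg01 i (combineStrategy i xi (minusStrategy i xh))
      have hminle : min (fθ i (combineStrategy i xi (minusStrategy i xh)))
          (v i (minusStrategy i xh)) ≤ v i (minusStrategy i xh) := min_le_right _ _
      rw [hgev] at hminle
      simp only [hmm, hgev, hgx, min_self]
      have := h2.1
      linarith
    · intro h i
      obtain ⟨ys, hys, heq⟩ := hex i (minusStrategy i xh)
      have hNE := h i ys
      have hmm := minus_combine i ys (minusStrategy i xh)
      have hfeas : combineStrategy i ys (minusStrategy i xh) ∈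
          {x : ∀ j, C j | x i ∈ K i (minusStrategy i x)} := by
        simp only [mem_setOf_eq, combine_self, hmm]
        exact hys
      have hgys : g i (combineStrategy i ys (minusStrategy i xh)) = 0 :=
        (hg0 i _).2 hfeas
      simp only [hmm, hgys, heq, min_self] at hNE
      -- hNE : (v zi - 0 + 2)/3 ≤ (min (fθ xh) (v zi) - g xh + 2)/3
      have hminle : min (fθ i xh) (v i (minusStrategy i xh)) ≤ v i (minusStrategy i xh) :=
        min_le_right _ _
      have hgnn := (hg01 i xh).1
      have hgx : g i xh = 0 := by linarith
      have hfge : v i (minusStrategy i xh) ≤ fθ i xh := by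
        have hminle' : min (fθ i xh) (v i (minusStrategy i xh)) ≤ fθ i xh := min_le_left _ _
        by_contra hlt
        push_neg at hlt
        have : min (fθ i xh) (v i (minusStrategy i xh)) = fθ i xh :=
          min_eq_left hlt.le
        rw [this] at hNE
        linarith
      refine ⟨(hg0 i xh).1 hgx, fun xi hxi => ?_⟩
      have := hub i (minusStrategy i xh) xi hxi
      exact (hmono i _ _).1 (le_trans this hfge)
end
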